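/- arXiv:2305.13554 — 10 statements merged into one kernel-verified Lean document; each statement's English description precedes it below -/
import Mathlib

section
/- Let h be a polynomial with complex coefficients, let r > 0 and s ∈ ℝ, and let 𝔲, 𝔳, 𝔷 be holomorphic disk components such that 𝔲(ζ)·𝔳(ζ) = h(𝔷(ζ)) for all ζ ∈ 𝔻, 𝔷 has no zeros on 𝔻, and for every ζ with |ζ| = 1 one has |𝔷(ζ)| = r and |𝔲(ζ)|² − |𝔳(ζ)|² = 2s. Then 𝔷 is constant on 𝔻; and if moreover h(𝔷(0)) ≠ 0, then 𝔲 and 𝔳 are also constant on 𝔻. -/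
open Metric Set Complex

/-- A *holomorphic disk component*: a function on the closed unit disk `𝔻 ⊆ ℂ` which is
continuous on `𝔻` and complex differentiable on the open unit disk. -/
def IsHolomorphicDiskComponent (f : ℂ → ℂ) : Prop :=
  ContinuousOn f (Metric.closedBall 0 1) ∧ DifferentiableOn ℂ f (Metric.ball 0 1)


lemma key_const (f : ℂ → ℂ) (hf : IsHolomorphicDiskComponent f)
    (hne : ∀ ζ ∈ Metric.closedBall (0:ℂ) 1, f ζ ≠ 0) (ρ : ℝ)
    (hb : ∀ ζ : ℂ, ‖ζ‖ = 1 → ‖f ζ‖ = ρ) :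
    ∀ ζ ∈ Metric.closedBall (0:ℂ) 1, f ζ = f 0 := by
  have hcl : closure (Metric.ball (0:ℂ) 1) = Metric.closedBall 0 1 := closure_ball 0 one_ne_zero
  have hfr : frontier (Metric.ball (0:ℂ) 1) = Metric.sphere 0 1 := frontier_ball 0 one_ne_zero
  have hd : DiffContOnCl ℂ f (Metric.ball 0 1) := ⟨hf.2, by rw [hcl]; exact hf.1⟩
  have hρ : 0 < ρ := by
    have h1 : (1:ℂ) ∈ Metric.closedBall (0:ℂ) 1 := by simp
    have := hne 1 h1
    have : ‖f 1‖ = ρ := hb 1 (by simp)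
    rw [← this]
    simpa using hne 1 h1
  -- upper bound
  have hub : ∀ ζ ∈ Metric.closedBall (0:ℂ) 1, ‖f ζ‖ ≤ ρ := by
    intro ζ hζ
    refine Complex.norm_le_of_forall_mem_frontier_norm_le isBounded_ball hd ?_ (by rwa [hcl])
    intro w hw
    rw [hfr, mem_sphere_zero_iff_norm] at hw
    exact le_of_eq (hb w hw)
  -- lower bound via 1/f
  have hlb : ∀ ζ ∈ Metric.closedBall (0:ℂ) 1, ρ ≤ ‖f ζ‖ := by
    intro ζ hζ
    have hdg : DiffContOnCl ℂ (fun w => (f w)⁻¹) (Metric.ball 0 1) := by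
      refine ⟨?_, ?_⟩
      · exact hf.2.inv (fun w hw => hne w (ball_subset_closedBall hw))
      · rw [hcl]; exact hf.1.inv₀ hne
    have hinv : ‖(f ζ)⁻¹‖ ≤ ρ⁻¹ := by
      refine Complex.norm_le_of_forall_mem_frontier_norm_le isBounded_ball hdg ?_ (by rwa [hcl])
      intro w hw
      rw [hfr, mem_sphere_zero_iff_norm] at hw
      rw [norm_inv]
      have : ‖f w‖ = ρ := hb w hw
      rw [this]
    have hfζ : f ζ ≠ 0 := hne ζ hζ
    rw [norm_inv] at hinv
    have hpos : 0 < ‖f ζ‖ := norm_pos_iff.mpr hfζ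
    exact (inv_le_inv₀ hpos hρ).mp hinv
  have hmax : IsMaxOn (norm ∘ f) (Metric.ball (0:ℂ) 1) 0 := by
    intro w hw
    simp only [Function.comp]
    have h0 : ρ ≤ ‖f 0‖ := hlb 0 (by simp)
    exact le_trans (hub w (ball_subset_closedBall hw)) h0
  have := Complex.eqOn_closedBall_of_isMaxOn_norm hd hmax
  intro ζ hζ
  exact this hζ

lemma quad_root (t k s : ℝ) (ht : 0 < t) (hk : 0 < k) (heq : t ^ 2 - 2 * s * t - k = 0) :
    t = s + Real.sqrt (s ^ 2 + k) := by
  have hsq : (t - s) ^ 2 = s ^ 2 + k := by ring_nf; nlinarith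
  have h1 : Real.sqrt (s ^ 2 + k) > |s| := by
    have : |s| = Real.sqrt (s ^ 2) := by rw [Real.sqrt_sq_eq_abs]
    rw [this]
    exact Real.sqrt_lt_sqrt (sq_nonneg s) (by linarith)
  have h2 : t - s = Real.sqrt (s ^ 2 + k) ∨ t - s = -Real.sqrt (s ^ 2 + k) := by
    have hs : Real.sqrt (s ^ 2 + k) ^ 2 = s ^ 2 + k := Real.sq_sqrt (by positivity)
    rcases sq_eq_sq_iff_eq_or_eq_neg.mp (hsq.trans hs.symm) with h | h
    · left; exact h
    · right; exact h
  rcases h2 with h | h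
  · linarith
  · exfalso
    have : t = s - Real.sqrt (s ^ 2 + k) := by linarith
    have habs : s ≤ |s| := le_abs_self s
    linarith

/-- A holomorphic disk `(𝔲, 𝔳, 𝔷)` in `{uv = h(z)}` avoiding `z = 0` whose
boundary lies in the Lagrangian fiber `{½(|u|²−|v|²) = s, |z| = r}` has constant
`z`-component; and if moreover `h(𝔷(0)) ≠ 0` then `𝔲` and `𝔳` are also constant. -/
theorem holomorphic_disk_constant_z
    (h : Polynomial ℂ) (r s : ℝ) (hr : 0 < r)
    (u v z : ℂ → ℂ)
    (hu : IsHolomorphicDiskComponent u)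
    (hv : IsHolomorphicDiskComponent v)
    (hz : IsHolomorphicDiskComponent z)
    (huv : ∀ ζ ∈ Metric.closedBall (0:ℂ) 1, u ζ * v ζ = h.eval (z ζ))
    (hzne : ∀ ζ ∈ Metric.closedBall (0:ℂ) 1, z ζ ≠ 0)
    (hbz : ∀ ζ : ℂ, ‖ζ‖ = 1 → ‖z ζ‖ = r)
    (hbuv : ∀ ζ : ℂ, ‖ζ‖ = 1 →
      ‖u ζ‖^2 - ‖v ζ‖^2 = 2 * s) :
    (∀ ζ ∈ Metric.closedBall (0:ℂ) 1, z ζ = z 0) ∧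
    (h.eval (z 0) ≠ 0 →
      (∀ ζ ∈ Metric.closedBall (0:ℂ) 1, u ζ = u 0) ∧
      (∀ ζ ∈ Metric.closedBall (0:ℂ) 1, v ζ = v 0)) := by
  have hzc : ∀ ζ ∈ Metric.closedBall (0:ℂ) 1, z ζ = z 0 := key_const z hz hzne r hbz
  refine ⟨hzc, fun hc0 => ?_⟩
  set c : ℂ := h.eval (z 0) with hc
  -- u * v = c on the closed ball
  have huvc : ∀ ζ ∈ Metric.closedBall (0:ℂ) 1, u ζ * v ζ = c := by
    intro ζ hζ; rw [huv ζ hζ, hzc ζ hζ]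
  have hune : ∀ ζ ∈ Metric.closedBall (0:ℂ) 1, u ζ ≠ 0 := by
    intro ζ hζ hz0
    apply hc0; rw [← huvc ζ hζ, hz0, zero_mul]
  have hvne : ∀ ζ ∈ Metric.closedBall (0:ℂ) 1, v ζ ≠ 0 := by
    intro ζ hζ hz0
    apply hc0; rw [← huvc ζ hζ, hz0, mul_zero]
  set k : ℝ := (‖c‖) ^ 2 with hk
  have hkpos : 0 < k := by
    have : ‖c‖ ≠ 0 := by simpa using hc0
    positivity
  -- on the boundary, |u ζ|² is the positive root of t² - 2st - k = 0
  have hbu : ∀ ζ : ℂ, ‖ζ‖ = 1 →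
      ‖u ζ‖ = Real.sqrt (s + Real.sqrt (s ^ 2 + k)) := by
    intro ζ hζ
    have hζb : ζ ∈ Metric.closedBall (0:ℂ) 1 := by
      simp [Metric.mem_closedBall, ← dist_zero_right, ← hζ]
    have habs : ‖u ζ‖ * ‖v ζ‖ = ‖c‖ := by
      rw [← norm_mul, huvc ζ hζb]
    set t : ℝ := (‖u ζ‖) ^ 2 with htd
    have htpos : 0 < t := by
      have hne' : ‖u ζ‖ ≠ 0 := by simpa using hune ζ hζb
      positivity
    have habs2 : (‖u ζ‖) ^ 2 * (‖v ζ‖) ^ 2 = k := by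
      rw [hk, ← mul_pow, habs]
    have hvval : (‖v ζ‖) ^ 2 = k / t := by
      rw [eq_div_iff htpos.ne', htd]
      linarith [habs2]
    have heq : t ^ 2 - 2 * s * t - k = 0 := by
      have hb := hbuv ζ hζ
      rw [hvval] at hb
      field_simp at hb
      nlinarith [hb]
    have := quad_root t k s htpos hkpos heq
    rw [htd] at this
    rw [← this]
    exact (Real.sqrt_sq (by positivity)).symm
  have huc := key_const u hu hune _ hbu
  refine ⟨huc, ?_⟩
  intro ζ hζ
  have h0 : (0:ℂ) ∈ Metric.closedBall (0:ℂ) 1 := by simp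
  have e1 : u 0 * v ζ = c := by rw [← huc ζ hζ]; exact huvc ζ hζ
  have e2 : u 0 * v 0 = c := huvc 0 h0
  have := e1.trans e2.symm
  exact mul_left_cancel₀ (hune 0 h0) this
end

section
/- Let (s,r) ∈ ℝ × ℝ_{>0} and assume (s,r) ≠ (0, |a_k|) for every 0 ≤ k ≤ n. Then there exists a nonconstant triple of holomorphic disk components 𝔲, 𝔳, 𝔷 with (𝔲(ζ), 𝔳(ζ), 𝔷(ζ)) ∈ X for all ζ ∈ 𝔻 and (𝔲(ζ), 𝔳(ζ), 𝔷(ζ)) ∈ L_{(s,r)} for all ζ with |ζ| = 1, if and only if r = |a_k| for some 0 ≤ k ≤ n. -/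
open Metric Set

lemma diskComp_diffContOnCl {f : ℂ → ℂ} (hf : IsHolomorphicDiskComponent f) :
    DiffContOnCl ℂ f (ball (0:ℂ) 1) := by
  refine ⟨hf.2, ?_⟩
  rw [closure_ball (0:ℂ) one_ne_zero]; exact hf.1

/-- If `f` is a holomorphic disk component, nonvanishing on the closed disk, with constant
modulus `t` on the boundary circle, then `f` is constant on the closed disk. -/
lemma const_of_const_boundary_norm {f : ℂ → ℂ} (hf : IsHolomorphicDiskComponent f)
    {t : ℝ}
    (hb : ∀ ζ : ℂ, ‖ζ‖ = 1 → ‖f ζ‖ = t)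
    (h0 : ∀ ζ ∈ closedBall (0:ℂ) 1, f ζ ≠ 0) :
    ∀ ζ ∈ closedBall (0:ℂ) 1, f ζ = f 0 := by
  have hcl : closure (ball (0:ℂ) 1) = closedBall (0:ℂ) 1 := closure_ball (0:ℂ) one_ne_zero
  have hfr : frontier (ball (0:ℂ) 1) = sphere (0:ℂ) 1 := frontier_ball (0:ℂ) one_ne_zero
  have hub : ∀ ζ ∈ closedBall (0:ℂ) 1, ‖f ζ‖ ≤ t := by
    intro ζ hζ
    refine Complex.norm_le_of_forall_mem_frontier_norm_le isBounded_ball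
      (diskComp_diffContOnCl hf) (fun w hw => ?_) (hcl ▸ hζ)
    rw [hfr, mem_sphere_zero_iff_norm] at hw
    exact le_of_eq (hb w hw)
  have ht : 0 < t := lt_of_lt_of_le (norm_pos_iff.2 (h0 0 (mem_closedBall_self zero_le_one)))
    (hub 0 (mem_closedBall_self zero_le_one))
  have hinv : DiffContOnCl ℂ (fun ζ => (f ζ)⁻¹) (ball (0:ℂ) 1) := by
    refine ⟨?_, ?_⟩
    · exact DifferentiableOn.inv hf.2 (fun ζ hζ => h0 ζ (ball_subset_closedBall hζ))
    · rw [hcl]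
      exact ContinuousOn.inv₀ hf.1 h0
  have hlb : ∀ ζ ∈ closedBall (0:ℂ) 1, t ≤ ‖f ζ‖ := by
    intro ζ hζ
    have : ‖(f ζ)⁻¹‖ ≤ t⁻¹ := by
      refine Complex.norm_le_of_forall_mem_frontier_norm_le isBounded_ball hinv
        (fun w hw => ?_) (hcl ▸ hζ)
      rw [hfr, mem_sphere_zero_iff_norm] at hw
      rw [norm_inv]
      exact le_of_eq (by rw [show ‖f w‖ = t from hb w hw])
    have hne := h0 ζ hζ
    rw [norm_inv] at this
    calc t = (t⁻¹)⁻¹ := (inv_inv t).symm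
    _ ≤ (‖f ζ‖⁻¹)⁻¹ := inv_anti₀ (inv_pos.2 (norm_pos_iff.2 hne)) this
    _ = ‖f ζ‖ := inv_inv _
  have hmax : IsMaxOn (norm ∘ f) (ball (0:ℂ) 1) 0 := by
    intro ζ hζ
    simp only [Function.comp]
    calc ‖f ζ‖ ≤ t := hub ζ (ball_subset_closedBall hζ)
    _ ≤ ‖f 0‖ := hlb 0 (mem_closedBall_self zero_le_one)
  have := Complex.eqOn_closure_of_isPreconnected_of_isMaxOn_norm
    (convex_ball (0:ℂ) 1).isPreconnected isOpen_ball (diskComp_diffContOnCl hf)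
    (mem_ball_self one_pos) hmax
  rw [hcl] at this
  exact fun ζ hζ => this hζ

lemma one_mem_cb : (1:ℂ) ∈ closedBall (0:ℂ) 1 := by
  simp [mem_closedBall, dist_eq_norm]

/-- For `h(z) = ∏ (z - a k)` with the `a k` pairwise distinct and nonzero,
and a smooth base point `(s, r)` (i.e. `(s,r) ≠ (0, |a k|)` for all `k`), the Lagrangian
torus fiber `L_{(s,r)}` bounds a nonconstant holomorphic disk in `X = {uv = h(z)} ∖ {z = 0}`
if and only if `r = |a k|` for some `k` (the walls). -/
theorem wall_location (n : ℕ) (a : Fin (n+1) → ℂ)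
    (ha : Function.Injective a) (ha0 : ∀ k, a k ≠ 0)
    (s r : ℝ) (hr : 0 < r)
    (hsing : ∀ k : Fin (n+1), (s, r) ≠ ((0:ℝ), ‖a k‖)) :
    (∃ u v z : ℂ → ℂ,
      IsHolomorphicDiskComponent u ∧ IsHolomorphicDiskComponent v ∧
      IsHolomorphicDiskComponent z ∧
      (∀ ζ ∈ Metric.closedBall (0:ℂ) 1,
        u ζ * v ζ = ∏ k, (z ζ - a k) ∧ z ζ ≠ 0) ∧
      (∀ ζ : ℂ, ‖ζ‖ = 1 →
        (1/2) * (‖u ζ‖^2 - ‖v ζ‖^2) = s ∧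
        ‖z ζ‖ = r) ∧
      ¬ (∀ ζ ∈ Metric.closedBall (0:ℂ) 1, (u ζ, v ζ, z ζ) = (u 0, v 0, z 0)))
    ↔ ∃ k : Fin (n+1), r = ‖a k‖ := by
  constructor
  · rintro ⟨u, v, z, hu, hv, hz, hX, hb, hnc⟩
    by_contra hno
    push_neg at hno
    apply hnc
    -- z is constant
    have hz0 : ∀ ζ ∈ closedBall (0:ℂ) 1, z ζ ≠ 0 := fun ζ hζ => (hX ζ hζ).2
    have hzb : ∀ ζ : ℂ, ‖ζ‖ = 1 → ‖z ζ‖ = r := fun ζ hζ => (hb ζ hζ).2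
    have hzc : ∀ ζ ∈ closedBall (0:ℂ) 1, z ζ = z 0 :=
      const_of_const_boundary_norm hz hzb hz0
    have habs_z0 : ‖z 0‖ = r := by
      rw [← hzc 1 one_mem_cb]
      exact hzb 1 (by simp)
    set c : ℂ := ∏ k, (z 0 - a k) with hc_def
    have hc0 : c ≠ 0 := by
      rw [hc_def]
      refine Finset.prod_ne_zero_iff.2 (fun k _ hk => ?_)
      apply hno k
      rw [← habs_z0, sub_eq_zero.1 hk]
    have huv : ∀ ζ ∈ closedBall (0:ℂ) 1, u ζ * v ζ = c := by
      intro ζ hζ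
      rw [(hX ζ hζ).1, hc_def]
      exact Finset.prod_congr rfl (fun k _ => by rw [hzc ζ hζ])
    have hu0 : ∀ ζ ∈ closedBall (0:ℂ) 1, u ζ ≠ 0 := by
      intro ζ hζ h
      exact hc0 (by rw [← huv ζ hζ, h, zero_mul])
    -- modulus of u on the boundary
    set q : ℝ := Real.sqrt (s^2 + ‖c‖^2) with hq_def
    have hq2 : q^2 = s^2 + ‖c‖^2 := Real.sq_sqrt (by positivity)
    have hq0 : 0 ≤ q := Real.sqrt_nonneg _
    have hcpos : 0 < ‖c‖ := by
      simpa using hc0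
    have hqs : |s| < q := by
      have : |s| = Real.sqrt (s^2) := (Real.sqrt_sq_eq_abs s).symm
      rw [this, hq_def]
      apply Real.sqrt_lt_sqrt (by positivity)
      nlinarith
    have hub : ∀ ζ : ℂ, ‖ζ‖ = 1 → ‖u ζ‖ = Real.sqrt (s + q) := by
      intro ζ hζ
      have hζcb : ζ ∈ closedBall (0:ℂ) 1 := by
        simp [mem_closedBall, dist_eq_norm, hζ]
      have hAB : ‖u ζ‖ * ‖v ζ‖ = ‖c‖ := by
        rw [← norm_mul, huv ζ hζcb]
      have hs := (hb ζ hζ).1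
      set A := ‖u ζ‖ with hA
      set B := ‖v ζ‖ with hB
      have hA0 : 0 ≤ A := norm_nonneg _
      have hkey : (A^2 - s - q) * (A^2 - s + q) = 0 := by nlinarith
      have hAq : A^2 = s + q := by
        rcases mul_eq_zero.1 hkey with h | h
        · linarith
        · exfalso
          have : 0 < A := lt_of_le_of_ne hA0 (fun h' => by
            apply hc0
            rw [← huv ζ hζcb]
            have : u ζ = 0 := by
              rw [← norm_eq_zero, ← hA, ← h']
            rw [this, zero_mul])
          nlinarith [le_abs_self s, neg_abs_le s]
      rw [← hAq, Real.sqrt_sq hA0]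
    have huc : ∀ ζ ∈ closedBall (0:ℂ) 1, u ζ = u 0 :=
      const_of_const_boundary_norm hu hub hu0
    have hvc : ∀ ζ ∈ closedBall (0:ℂ) 1, v ζ = v 0 := by
      intro ζ hζ
      have h1 := huv ζ hζ
      have h2 := huv 0 (mem_closedBall_self zero_le_one)
      rw [huc ζ hζ] at h1
      exact mul_left_cancel₀ (hu0 0 (mem_closedBall_self zero_le_one)) (h1.trans h2.symm)
    intro ζ hζ
    simp [huc ζ hζ, hvc ζ hζ, hzc ζ hζ]
  · rintro ⟨k, hk⟩
    have hs : s ≠ 0 := by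
      intro h
      exact hsing k (by rw [h, hk])
    have hprod : ∀ w : ℂ, (∏ j, (a k - a j)) = 0 := by
      intro w
      exact Finset.prod_eq_zero (Finset.mem_univ k) (sub_self _)
    rcases hs.lt_or_gt with hneg | hpos
    · -- s < 0 : take u = 0, v = sqrt(-2s) ζ, z = a k
      set β : ℝ := Real.sqrt (-2*s) with hβ
      have hβpos : 0 < β := Real.sqrt_pos.2 (by linarith)
      refine ⟨fun _ => 0, fun ζ => (β:ℂ) * ζ, fun _ => a k, ?_, ?_, ?_, ?_, ?_, ?_⟩
      · exact ⟨continuousOn_const, differentiableOn_const _⟩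
      · exact ⟨(continuous_const.mul continuous_id).continuousOn,
          ((differentiable_const _).mul differentiable_id).differentiableOn⟩
      · exact ⟨continuousOn_const, differentiableOn_const _⟩
      · intro ζ hζ
        refine ⟨?_, ha0 k⟩
        rw [zero_mul, (hprod ζ).symm]
      · intro ζ hζ
        constructor
        · have : ‖(β:ℂ) * ζ‖ = β := by
            rw [norm_mul, Complex.norm_real, Real.norm_of_nonneg hβpos.le, hζ,
              mul_one]
          rw [this]
          have : β^2 = -2*s := Real.sq_sqrt (by linarith)
          simp only [norm_zero]
          rw [this]; ring
        · exact hk.symm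
      · intro h
        have h1 := h 1 one_mem_cb
        simp only [Prod.mk.injEq] at h1
        have : (β:ℂ) * 1 = (β:ℂ) * 0 := h1.2.1
        simp only [mul_one, mul_zero, Complex.ofReal_eq_zero] at this
        exact hβpos.ne' this
    · -- s > 0 : take u = sqrt(2s) ζ, v = 0, z = a k
      set α : ℝ := Real.sqrt (2*s) with hα
      have hαpos : 0 < α := Real.sqrt_pos.2 (by linarith)
      refine ⟨fun ζ => (α:ℂ) * ζ, fun _ => 0, fun _ => a k, ?_, ?_, ?_, ?_, ?_, ?_⟩
      · exact ⟨(continuous_const.mul continuous_id).continuousOn,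
          ((differentiable_const _).mul differentiable_id).differentiableOn⟩
      · exact ⟨continuousOn_const, differentiableOn_const _⟩
      · exact ⟨continuousOn_const, differentiableOn_const _⟩
      · intro ζ hζ
        refine ⟨?_, ha0 k⟩
        rw [mul_zero, (hprod ζ).symm]
      · intro ζ hζ
        constructor
        · have : ‖(α:ℂ) * ζ‖ = α := by
            rw [norm_mul, Complex.norm_real, Real.norm_of_nonneg hαpos.le, hζ,
              mul_one]
          rw [this]
          have : α^2 = 2*s := Real.sq_sqrt (by linarith)
          simp only [norm_zero]
          rw [this]; ring
        · exact hk.symm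
      · intro h
        have h1 := h 1 one_mem_cb
        simp only [Prod.mk.injEq] at h1
        have : (α:ℂ) * 1 = (α:ℂ) * 0 := h1.1
        simp only [mul_one, mul_zero, Complex.ofReal_eq_zero] at this
        exact hαpos.ne' this
end

section
/- Let h be a nonconstant polynomial with complex coefficients having no repeated roots. Then for every s ∈ ℝ and every r > 0 the value ψ(s,r) is finite; for each fixed s the function r ↦ ψ(s,r) is strictly increasing on (0,∞); and for each fixed s one has ψ(s,r) → 0 as r → 0⁺ and ψ(s,r) → +∞ as r → +∞. -/
open MeasureTheory

/-- The reduced Kähler area function of the `Aₙ`-smoothing `{uv = h(z)}`: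
`ψ(s,r)` is the Lebesgue (area) integral over the closed disk of radius `r` in `ℂ` of
`1 + |h′(z)|² / (2·√(|h(z)|² + s²))`, valued in `[0,∞]`. -/
noncomputable def psiArea (h : Polynomial ℂ) (s r : ℝ) : ENNReal :=
  ∫⁻ z in Metric.closedBall (0:ℂ) r,
    ENNReal.ofReal
      (1 + ‖(Polynomial.derivative h).eval z‖^2 /
        (2 * Real.sqrt (‖h.eval z‖^2 + s^2)))


open Metric Set Polynomial Filter in
/-- integrability of `1/|z-a|` on disks. -/
lemma lintegral_inv_dist_lt_top (a : ℂ) (R : ℝ) :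
    ∫⁻ z in Metric.closedBall a R, ENNReal.ofReal (1 / ‖z - a‖) < ⊤ := by
  rcases le_or_gt R 0 with hR | hR
  · have hv : volume (Metric.closedBall a R) = 0 := by
      rcases lt_or_eq_of_le hR with h | h
      · simp [Metric.closedBall_eq_empty.mpr h]
      · rw [h, Metric.closedBall_zero]
        exact measure_singleton a
    rw [Measure.restrict_eq_zero.mpr hv, lintegral_zero_measure]
    exact ENNReal.zero_lt_top
  · set A : ℕ → Set ℂ := fun n => Metric.closedBall a (R / 2 ^ n) \
      Metric.closedBall a (R / 2 ^ (n + 1)) with hA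
    have hsub : Metric.closedBall a R ⊆ {a} ∪ ⋃ n, A n := by
      intro z hz
      by_cases hza : z = a
      · exact Or.inl (by simp [hza])
      · have hz0 : 0 < ‖z - a‖ := by
          rw [norm_pos_iff]; exact sub_ne_zero.mpr hza
        have hex : ∃ n : ℕ, R / 2 ^ (n + 1) < ‖z - a‖ := by
          obtain ⟨n, hn⟩ := pow_unbounded_of_one_lt (R / ‖z - a‖) (by norm_num : (1:ℝ) < 2)
          refine ⟨n, ?_⟩
          rw [div_lt_iff₀ (by positivity)]
          rw [div_lt_iff₀ hz0] at hn
          have h2n : (2:ℝ) ^ n ≤ 2 ^ (n + 1) := by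
            have := pow_le_pow_right₀ (by norm_num : (1:ℝ) ≤ 2) (Nat.le_succ n)
            exact this
          calc R < 2 ^ n * ‖z - a‖ := hn
            _ ≤ 2 ^ (n + 1) * ‖z - a‖ := mul_le_mul_of_nonneg_right h2n hz0.le
            _ = ‖z - a‖ * 2 ^ (n + 1) := mul_comm _ _
        refine Or.inr (Set.mem_iUnion.mpr ⟨Nat.find hex, ?_⟩)
        have h1 : R / 2 ^ (Nat.find hex + 1) < ‖z - a‖ := Nat.find_spec hex
        have h2 : ‖z - a‖ ≤ R / 2 ^ (Nat.find hex) := by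
          cases hfind : Nat.find hex with
          | zero =>
              rw [pow_zero, div_one]
              rw [Metric.mem_closedBall, dist_eq_norm] at hz; exact hz
          | succ m =>
              exact le_of_not_gt (Nat.find_min hex (lt_of_lt_of_eq m.lt_succ_self hfind.symm))
        constructor
        · rw [Metric.mem_closedBall, dist_eq_norm]; exact h2
        · intro hmem
          rw [Metric.mem_closedBall, dist_eq_norm] at hmem
          exact absurd hmem (not_le.mpr h1)
    calc ∫⁻ z in Metric.closedBall a R, ENNReal.ofReal (1 / ‖z - a‖)
        ≤ ∫⁻ z in {a} ∪ ⋃ n, A n, ENNReal.ofReal (1 / ‖z - a‖) :=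
          lintegral_mono_set hsub
      _ ≤ (∫⁻ z in ({a} : Set ℂ), ENNReal.ofReal (1 / ‖z - a‖)) +
          ∫⁻ z in ⋃ n, A n, ENNReal.ofReal (1 / ‖z - a‖) :=
          lintegral_union_le _ _ _
      _ ≤ 0 + ∑' n, ∫⁻ z in A n, ENNReal.ofReal (1 / ‖z - a‖) := by
          gcongr
          · rw [Measure.restrict_eq_zero.mpr (measure_singleton a), lintegral_zero_measure]
          · exact lintegral_iUnion_le _ _
      _ = ∑' n, ∫⁻ z in A n, ENNReal.ofReal (1 / ‖z - a‖) := by rw [zero_add]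
      _ ≤ ∑' n, ENNReal.ofReal (2 * R * Real.pi) * ENNReal.ofReal (1/2) ^ n := by
          gcongr with n
          calc ∫⁻ z in A n, ENNReal.ofReal (1 / ‖z - a‖)
              ≤ ∫⁻ _ in A n, ENNReal.ofReal (2 ^ (n + 1) / R) := by
                refine setLIntegral_mono measurable_const (fun z hz => ?_)
                refine ENNReal.ofReal_le_ofReal ?_
                have h1 : R / 2 ^ (n + 1) < ‖z - a‖ := by
                  have := hz.2
                  rw [Metric.mem_closedBall, dist_eq_norm, not_le] at this
                  exact this
                rw [div_le_div_iff₀ (by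
                  rw [norm_pos_iff]; intro h; rw [h] at h1; simp at h1
                  exact absurd h1 (not_lt.mpr (by positivity)) ) (by positivity)]
                rw [one_mul]
                rw [div_lt_iff₀ (by positivity)] at h1
                nlinarith [h1]
            _ = ENNReal.ofReal (2 ^ (n + 1) / R) * volume (A n) := setLIntegral_const _ _
            _ ≤ ENNReal.ofReal (2 ^ (n + 1) / R) * volume (Metric.closedBall a (R / 2 ^ n)) := by
                exact mul_le_mul_right (measure_mono Set.diff_subset) _
            _ = ENNReal.ofReal (2 ^ (n + 1) / R) * (ENNReal.ofReal (R / 2 ^ n) ^ 2 * NNReal.pi) := by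
                rw [Complex.volume_closedBall]
            _ ≤ ENNReal.ofReal (2 * R * Real.pi) * ENNReal.ofReal (1/2) ^ n := by
                rw [← ENNReal.ofReal_pow (by positivity), ← ENNReal.ofReal_pow (by norm_num),
                  ← ENNReal.ofReal_coe_nnreal]
                rw [← mul_assoc, ← ENNReal.ofReal_mul (by positivity),
                  ← ENNReal.ofReal_mul (by positivity), ← ENNReal.ofReal_mul (by positivity)]
                refine ENNReal.ofReal_le_ofReal (le_of_eq ?_)
                rw [NNReal.coe_real_pi]
                field_simp
                ring_nf
                rw [one_div, inv_pow, pow_mul, sq, inv_mul_cancel_left₀ (by positivity)]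
      _ < ⊤ := by
          rw [ENNReal.tsum_mul_left, ENNReal.tsum_geometric]
          refine ENNReal.mul_lt_top ENNReal.ofReal_lt_top ?_
          rw [ENNReal.inv_lt_top]
          rw [tsub_pos_iff_lt]
          calc ENNReal.ofReal (1/2) < ENNReal.ofReal 1 := by
                rw [ENNReal.ofReal_lt_ofReal_iff] <;> norm_num
            _ = 1 := ENNReal.ofReal_one

open Polynomial in
lemma finset_derivative_prod_X_sub_C (s : Finset ℂ) :
    Polynomial.derivative (∏ a ∈ s, (X - C a)) =
      ∑ a ∈ s, ∏ b ∈ s.erase a, (X - C b) := by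
  classical
  rw [Finset.prod_eq_multiset_prod, Polynomial.derivative_prod, Finset.sum_eq_multiset_sum]
  congr 1
  refine Multiset.map_congr rfl (fun a ha => ?_)
  rw [derivative_X_sub_C, mul_one, ← Finset.erase_val, ← Finset.prod_eq_multiset_prod]

open Polynomial in
lemma abs_derivative_eval_le (h : Polynomial ℂ) (hnd : h.roots.Nodup)
    {z : ℂ} (hz : h.eval z ≠ 0) :
    ‖(Polynomial.derivative h).eval z‖ ≤
      ‖h.eval z‖ * ∑ a ∈ h.roots.toFinset, 1 / ‖z - a‖ := by
  classical
  have h0 : h ≠ 0 := fun hh => hz (by simp [hh])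
  set S : Finset ℂ := h.roots.toFinset with hS
  have hSv : S.val = h.roots := by
    rw [hS, Multiset.toFinset_val, Multiset.dedup_eq_self.mpr hnd]
  have heq : h = C h.leadingCoeff * ∏ a ∈ S, (X - C a) := by
    conv_lhs => rw [(IsAlgClosed.splits h).eq_prod_roots]
    congr 1
    rw [Finset.prod_eq_multiset_prod, hSv]
  have hroot_ne : ∀ a ∈ S, z - a ≠ 0 := by
    intro a ha hza
    have : a ∈ h.roots := by rwa [← hSv, ← Finset.mem_def]
    have hroot : h.eval a = 0 := (Polynomial.isRoot_of_mem_roots this)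
    rw [sub_eq_zero] at hza
    exact hz (hza ▸ hroot)
  have habs_h : ‖h.eval z‖ =
      ‖h.leadingCoeff‖ * ∏ a ∈ S, ‖z - a‖ := by
    conv_lhs => rw [heq]
    rw [eval_mul, eval_C, eval_prod, norm_mul, norm_prod]
    simp [eval_sub, eval_X, eval_C]
  have hd : Polynomial.derivative h = C h.leadingCoeff * ∑ a ∈ S, ∏ b ∈ S.erase a, (X - C b) := by
    conv_lhs => rw [heq]
    rw [derivative_C_mul, finset_derivative_prod_X_sub_C]
  rw [hd, eval_mul, eval_C, norm_mul, eval_finset_sum]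
  calc ‖h.leadingCoeff‖ *
        ‖∑ a ∈ S, eval z (∏ b ∈ S.erase a, (X - C b))‖
      ≤ ‖h.leadingCoeff‖ *
        ∑ a ∈ S, ‖eval z (∏ b ∈ S.erase a, (X - C b))‖ := by
        refine mul_le_mul_of_nonneg_left ?_ (norm_nonneg _)
        exact norm_sum_le _ _
    _ = ∑ a ∈ S, ‖h.leadingCoeff‖ * ∏ b ∈ S.erase a, ‖z - b‖ := by
        rw [Finset.mul_sum]
        refine Finset.sum_congr rfl (fun a ha => ?_)
        rw [eval_prod, norm_prod]
        simp [eval_sub, eval_X, eval_C]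
    _ = ∑ a ∈ S, ‖h.eval z‖ * (1 / ‖z - a‖) := by
        refine Finset.sum_congr rfl (fun a ha => ?_)
        have hza : ‖z - a‖ ≠ 0 := by
          exact norm_ne_zero_iff.mpr (hroot_ne a ha)
        have hpe : (∏ b ∈ S.erase a, ‖z - b‖) * ‖z - a‖ =
            ∏ b ∈ S, ‖z - b‖ := Finset.prod_erase_mul S _ ha
        rw [habs_h]
        field_simp
        nlinarith [hpe, norm_nonneg h.leadingCoeff]
    _ = ‖h.eval z‖ * ∑ a ∈ S, 1 / ‖z - a‖ := by rw [Finset.mul_sum]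


lemma psiArea_integrand_measurable (h : Polynomial ℂ) (s : ℝ) :
    Measurable fun z : ℂ => ENNReal.ofReal
      (1 + (‖(Polynomial.derivative h).eval z‖)^2 /
        (2 * Real.sqrt ((‖h.eval z‖)^2 + s^2))) := by
  apply Measurable.ennreal_ofReal
  apply Measurable.add measurable_const
  apply Measurable.div
  · exact ((continuous_norm.comp
      (Polynomial.continuous (Polynomial.derivative h))).pow 2).measurable
  · exact (continuous_const.mul (Real.continuous_sqrt.comp
      (((continuous_norm.comp (Polynomial.continuous h)).pow 2).add
        continuous_const))).measurable

lemma one_le_psiArea_integrand (h : Polynomial ℂ) (s : ℝ) (z : ℂ) :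
    1 ≤ ENNReal.ofReal
      (1 + (‖(Polynomial.derivative h).eval z‖)^2 /
        (2 * Real.sqrt ((‖h.eval z‖)^2 + s^2))) := by
  rw [← ENNReal.ofReal_one]
  refine ENNReal.ofReal_le_ofReal ?_
  have : 0 ≤ (‖(Polynomial.derivative h).eval z‖)^2 /
      (2 * Real.sqrt ((‖h.eval z‖)^2 + s^2)) := by positivity
  linarith

set_option maxHeartbeats 1000000 in
lemma psiArea_lt_top (h : Polynomial ℂ) (hsq : Squarefree h) (s r : ℝ) :
    psiArea h s r < ⊤ := by
  have h0 : h ≠ 0 := hsq.ne_zero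
  have hnd : h.roots.Nodup :=
    Polynomial.nodup_roots (PerfectField.separable_iff_squarefree.mpr hsq)
  obtain ⟨M, hM⟩ := (isCompact_closedBall (0:ℂ) r).exists_bound_of_continuousOn
    ((continuous_norm.comp
      (Polynomial.continuous (Polynomial.derivative h))).continuousOn)
  set M2 : ℝ := max M 0 with hM2def
  have hM2 : 0 ≤ M2 := le_max_right _ _
  have hMbound : ∀ z ∈ Metric.closedBall (0:ℂ) r,
      ‖(Polynomial.derivative h).eval z‖ ≤ M2 := by
    intro z hz
    have := hM z hz
    simp only [Function.comp_apply, Real.norm_eq_abs, abs_norm] at this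
    exact this.trans (le_max_left _ _)
  have hN : volume {z : ℂ | h.eval z = 0} = 0 := by
    have : {z : ℂ | h.eval z = 0}.Finite := by
      simpa [Polynomial.IsRoot] using Polynomial.finite_setOf_isRoot h0
    exact this.measure_zero _
  set S : Finset ℂ := h.roots.toFinset with hS
  set g : ℂ → ENNReal := fun z =>
    1 + ∑ a ∈ S, ENNReal.ofReal ((M2/2) * (1/‖z - a‖)) with hg
  have hbound : ∀ᵐ z ∂(volume.restrict (Metric.closedBall (0:ℂ) r)),
      ENNReal.ofReal
        (1 + (‖(Polynomial.derivative h).eval z‖)^2 /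
          (2 * Real.sqrt ((‖h.eval z‖)^2 + s^2))) ≤ g z := by
    have hae : ∀ᵐ z : ℂ ∂volume, h.eval z ≠ 0 := by
      have := MeasureTheory.measure_eq_zero_iff_ae_notMem.mp hN
      simpa using this
    filter_upwards [ae_restrict_mem measurableSet_closedBall, ae_restrict_of_ae hae]
      with z hzball hzroot
    set A := ‖(Polynomial.derivative h).eval z‖ with hA
    set B := ‖h.eval z‖ with hB
    have hBpos : 0 < B := norm_pos_iff.mpr hzroot
    have hsqrt : B ≤ Real.sqrt (B^2 + s^2) := by
      calc B = Real.sqrt (B^2) := (Real.sqrt_sq hBpos.le).symm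
        _ ≤ Real.sqrt (B^2 + s^2) := Real.sqrt_le_sqrt (by nlinarith [sq_nonneg s])
    have hq0 : 0 ≤ A^2 / (2 * Real.sqrt (B^2 + s^2)) := by positivity
    have hsum0 : 0 ≤ ∑ a ∈ S, 1/‖z - a‖ :=
      Finset.sum_nonneg (fun a _ => by positivity)
    have hder := abs_derivative_eval_le h hnd hzroot
    have key : A^2 / (2 * Real.sqrt (B^2 + s^2)) ≤ ∑ a ∈ S, (M2/2) * (1/‖z - a‖) := by
      have hA2 : A^2 ≤ (B * ∑ a ∈ S, 1/‖z - a‖) * M2 := by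
        have hAM := hMbound z hzball
        calc A^2 = A * A := pow_two A
          _ ≤ (B * ∑ a ∈ S, 1/‖z - a‖) * M2 :=
            mul_le_mul hder hAM (norm_nonneg _)
              (mul_nonneg (norm_nonneg _) hsum0)
      calc A^2 / (2 * Real.sqrt (B^2 + s^2)) ≤ A^2 / (2 * B) :=
            div_le_div_of_nonneg_left (by positivity) (by positivity) (by linarith)
        _ ≤ ((B * ∑ a ∈ S, 1/‖z - a‖) * M2) / (2 * B) := by gcongr
        _ = (M2/2) * ∑ a ∈ S, 1/‖z - a‖ := by field_simp
        _ = ∑ a ∈ S, (M2/2) * (1/‖z - a‖) := Finset.mul_sum _ _ _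
    calc ENNReal.ofReal (1 + A^2 / (2 * Real.sqrt (B^2 + s^2)))
        = 1 + ENNReal.ofReal (A^2 / (2 * Real.sqrt (B^2 + s^2))) := by
          rw [ENNReal.ofReal_add (by norm_num) hq0, ENNReal.ofReal_one]
      _ ≤ 1 + ∑ a ∈ S, ENNReal.ofReal ((M2/2) * (1/‖z - a‖)) := by
          gcongr
          calc ENNReal.ofReal (A^2 / (2 * Real.sqrt (B^2 + s^2)))
              ≤ ENNReal.ofReal (∑ a ∈ S, (M2/2) * (1/‖z - a‖)) :=
                ENNReal.ofReal_le_ofReal key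
            _ = ∑ a ∈ S, ENNReal.ofReal ((M2/2) * (1/‖z - a‖)) :=
                ENNReal.ofReal_sum_of_nonneg (fun a _ => by positivity)
  have hgm : ∀ a ∈ S, Measurable (fun z : ℂ => ENNReal.ofReal ((M2/2) * (1/‖z - a‖))) := by
    intro a _
    refine Measurable.ennreal_ofReal (measurable_const.mul ?_)
    exact measurable_const.div ((continuous_id.sub continuous_const).norm.measurable)
  calc psiArea h s r ≤ ∫⁻ z in Metric.closedBall (0:ℂ) r, g z := lintegral_mono_ae hbound
    _ = volume (Metric.closedBall (0:ℂ) r) +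
        ∑ a ∈ S, ∫⁻ z in Metric.closedBall (0:ℂ) r,
          ENNReal.ofReal ((M2/2) * (1/‖z - a‖)) := by
        rw [hg, lintegral_add_left measurable_const, setLIntegral_const,
          lintegral_finset_sum _ hgm, one_mul]
    _ < ⊤ := by
        refine ENNReal.add_lt_top.mpr ⟨measure_closedBall_lt_top, ?_⟩
        rw [ENNReal.sum_lt_top]
        intro a _
        calc ∫⁻ z in Metric.closedBall (0:ℂ) r, ENNReal.ofReal ((M2/2) * (1/‖z - a‖))
            = ENNReal.ofReal (M2/2) *
              ∫⁻ z in Metric.closedBall (0:ℂ) r, ENNReal.ofReal (1/‖z - a‖) := by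
              simp_rw [ENNReal.ofReal_mul (by positivity : (0:ℝ) ≤ M2/2)]
              have hmeas : Measurable (fun z : ℂ => ENNReal.ofReal (1/‖z - a‖)) :=
                Measurable.ennreal_ofReal
                  (measurable_const.div (measurable_id.sub measurable_const).norm)
              rw [lintegral_const_mul _ hmeas]
          _ ≤ ENNReal.ofReal (M2/2) *
              ∫⁻ z in Metric.closedBall a (r + ‖a‖), ENNReal.ofReal (1/‖z - a‖) := by
              refine mul_le_mul_right (lintegral_mono_set (fun z hz => ?_)) _
              rw [Metric.mem_closedBall, dist_eq_norm]
              rw [Metric.mem_closedBall, dist_zero_right] at hz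
              calc ‖z - a‖ ≤ ‖z‖ + ‖a‖ := norm_sub_le _ _
                _ ≤ r + ‖a‖ := by linarith
          _ < ⊤ := ENNReal.mul_lt_top ENNReal.ofReal_lt_top (lintegral_inv_dist_lt_top a _)


/-- For a nonconstant polynomial `h` with no repeated roots: `ψ(s,r)` is
finite for every `s ∈ ℝ`, `r > 0`; for fixed `s` the map `r ↦ ψ(s,r)` is strictly
increasing on `(0,∞)`; and `ψ(s,r) → 0` as `r → 0⁺` while `ψ(s,r) → +∞` as `r → +∞`. -/
theorem psiArea_finite_strictMono_limits
    (h : Polynomial ℂ) (hdeg : 0 < h.natDegree) (hsq : Squarefree h) :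
    (∀ (s r : ℝ), 0 < r → psiArea h s r < ⊤) ∧
    (∀ s : ℝ, StrictMonoOn (fun r => psiArea h s r) (Set.Ioi (0:ℝ))) ∧
    (∀ s : ℝ, Filter.Tendsto (fun r => psiArea h s r)
        (nhdsWithin 0 (Set.Ioi (0:ℝ))) (nhds 0)) ∧
    (∀ s : ℝ, Filter.Tendsto (fun r => psiArea h s r) Filter.atTop (nhds ⊤)) := by
  have hfin : ∀ s r : ℝ, psiArea h s r < ⊤ := fun s r => psiArea_lt_top h hsq s r
  have hmono : ∀ s : ℝ, ∀ r₁ r₂ : ℝ, r₁ ≤ r₂ → psiArea h s r₁ ≤ psiArea h s r₂ :=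
    fun s r₁ r₂ hr => lintegral_mono_set (Metric.closedBall_subset_closedBall hr)
  have hvol_le : ∀ s r : ℝ, volume (Metric.closedBall (0:ℂ) r) ≤ psiArea h s r := by
    intro s r
    calc volume (Metric.closedBall (0:ℂ) r)
        = ∫⁻ _ in Metric.closedBall (0:ℂ) r, 1 := (setLIntegral_one _).symm
      _ ≤ psiArea h s r := lintegral_mono (fun z => one_le_psiArea_integrand h s z)
  refine ⟨fun s r _ => hfin s r, ?_, ?_, ?_⟩
  · -- strict monotone
    intro s r₁ h₁ r₂ h₂ hlt
    simp only [Set.mem_Ioi] at h₁ h₂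
    set D : Set ℂ := Metric.closedBall (0:ℂ) r₂ \ Metric.closedBall (0:ℂ) r₁ with hD
    have hun : Metric.closedBall (0:ℂ) r₁ ∪ D = Metric.closedBall (0:ℂ) r₂ :=
      Set.union_diff_cancel (Metric.closedBall_subset_closedBall hlt.le)
    have hsplit : psiArea h s r₂ = psiArea h s r₁ +
        ∫⁻ z in D, ENNReal.ofReal
          (1 + (‖(Polynomial.derivative h).eval z‖)^2 /
            (2 * Real.sqrt ((‖h.eval z‖)^2 + s^2))) := by
      simp only [psiArea]
      rw [← hun, lintegral_union (measurableSet_closedBall.diff measurableSet_closedBall)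
        disjoint_sdiff_self_right]
    have hε : (0:ℝ) < (r₂ - r₁)/2 := by linarith
    have hballsub : Metric.ball ((((r₁+r₂)/2 : ℝ) : ℂ)) ((r₂ - r₁)/2) ⊆ D := by
      intro z hz
      rw [Metric.mem_ball, dist_eq_norm] at hz
      have hc : ‖(((r₁+r₂)/2 : ℝ) : ℂ)‖ = (r₁+r₂)/2 := by
        rw [Complex.norm_real, Real.norm_eq_abs, abs_of_nonneg (by linarith)]
      constructor
      · rw [Metric.mem_closedBall, dist_zero_right]
        calc ‖z‖ ≤ ‖z - (((r₁+r₂)/2 : ℝ) : ℂ)‖ + ‖(((r₁+r₂)/2 : ℝ) : ℂ)‖ := by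
              simpa using norm_add_le (z - (((r₁+r₂)/2 : ℝ) : ℂ)) (((r₁+r₂)/2 : ℝ) : ℂ)
          _ ≤ (r₂ - r₁)/2 + (r₁+r₂)/2 := by rw [hc]; linarith
          _ = r₂ := by ring
      · intro hmem
        rw [Metric.mem_closedBall, dist_zero_right] at hmem
        have : ‖(((r₁+r₂)/2 : ℝ) : ℂ)‖ - ‖z‖ ≤ ‖z - (((r₁+r₂)/2 : ℝ) : ℂ)‖ := by
          rw [norm_sub_rev]
          exact norm_sub_norm_le _ _
        rw [hc] at this
        linarith
    have hpi : (NNReal.pi : ENNReal) ≠ 0 := by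
      intro hh
      rw [ENNReal.coe_eq_zero] at hh
      exact Real.pi_ne_zero (by rw [← NNReal.coe_real_pi, hh]; simp)
    have hvolD : 0 < volume D := by
      calc (0:ENNReal) < ENNReal.ofReal ((r₂ - r₁)/2) ^ 2 * NNReal.pi := by
            refine ENNReal.mul_pos ?_ hpi
            exact (ENNReal.pow_pos (ENNReal.ofReal_pos.mpr hε) 2).ne'
        _ = volume (Metric.ball ((((r₁+r₂)/2 : ℝ) : ℂ)) ((r₂ - r₁)/2)) :=
            (Complex.volume_ball _ _).symm
        _ ≤ volume D := measure_mono hballsub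
    have hintD : 0 < ∫⁻ z in D, ENNReal.ofReal
        (1 + (‖(Polynomial.derivative h).eval z‖)^2 /
          (2 * Real.sqrt ((‖h.eval z‖)^2 + s^2))) := by
      calc (0:ENNReal) < volume D := hvolD
        _ = ∫⁻ _ in D, 1 := (setLIntegral_one _).symm
        _ ≤ _ := lintegral_mono (fun z => one_le_psiArea_integrand h s z)
    show psiArea h s r₁ < psiArea h s r₂
    rw [hsplit]
    exact ENNReal.lt_add_right (hfin s r₁).ne hintD.ne'
  · -- tendsto 0
    intro s
    have hfm := psiArea_integrand_measurable h s
    have hrepr : ∀ r : ℝ, psiArea h s r =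
        (volume.withDensity (fun z : ℂ => ENNReal.ofReal
          (1 + (‖(Polynomial.derivative h).eval z‖)^2 /
            (2 * Real.sqrt ((‖h.eval z‖)^2 + s^2)))))
          (Metric.closedBall (0:ℂ) r) :=
      fun r => (withDensity_apply _ measurableSet_closedBall).symm
    set μf := volume.withDensity (fun z : ℂ => ENNReal.ofReal
      (1 + (‖(Polynomial.derivative h).eval z‖)^2 /
        (2 * Real.sqrt ((‖h.eval z‖)^2 + s^2)))) with hμf
    have hinter : (⋂ n : ℕ, Metric.closedBall (0:ℂ) (1/(n+1))) = {(0:ℂ)} := by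
      ext z
      simp only [Set.mem_iInter, Metric.mem_closedBall, dist_zero_right, Set.mem_singleton_iff]
      constructor
      · intro hz
        by_contra hz0
        have hpos : 0 < ‖z‖ := norm_pos_iff.mpr hz0
        obtain ⟨n, hn⟩ := exists_nat_one_div_lt hpos
        exact absurd (hz n) (not_le.mpr hn)
      · intro hz; intro n; rw [hz]; simp; positivity
    have hanti : Antitone (fun n : ℕ => Metric.closedBall (0:ℂ) (1/(n+1))) := by
      intro n m hnm
      refine Metric.closedBall_subset_closedBall ?_
      have : ((n:ℝ)+1) ≤ ((m:ℝ)+1) := by exact_mod_cast Nat.succ_le_succ hnm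
      exact one_div_le_one_div_of_le (by positivity) this
    have hseq : Filter.Tendsto (fun n : ℕ => μf (Metric.closedBall (0:ℂ) (1/(n+1))))
        Filter.atTop (nhds 0) := by
      have h0 : μf (⋂ n : ℕ, Metric.closedBall (0:ℂ) (1/(n+1))) = 0 := by
        rw [hinter]
        exact (withDensity_absolutelyContinuous volume _) (measure_singleton 0)
      have := tendsto_measure_iInter_atTop
        (μ := μf) (s := fun n : ℕ => Metric.closedBall (0:ℂ) (1/(n+1)))
        (fun n => measurableSet_closedBall.nullMeasurableSet) hanti
        ⟨0, by rw [← hrepr]; exact (hfin s _).ne⟩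
      rw [h0] at this
      exact this
    rw [ENNReal.tendsto_nhds_zero]
    intro ε hε
    obtain ⟨n₀, hn₀⟩ := (ENNReal.tendsto_nhds_zero.mp hseq ε hε).exists
    refine Filter.eventually_of_mem
      (Ioo_mem_nhdsGT (by positivity : (0:ℝ) < 1/((n₀:ℝ)+1))) ?_
    intro r hr
    calc psiArea h s r ≤ psiArea h s (1/((n₀:ℝ)+1)) := hmono s _ _ hr.2.le
      _ = μf (Metric.closedBall (0:ℂ) (1/((n₀:ℝ)+1))) := hrepr _
      _ ≤ ε := hn₀
  · -- tendsto ⊤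
    intro s
    refine ENNReal.tendsto_nhds_top (fun n => ?_)
    filter_upwards [Filter.eventually_ge_atTop ((n:ℝ)+1)] with r hr
    have hn1 : (0:ℝ) ≤ (n:ℝ) := Nat.cast_nonneg n
    have h1 : (n : ENNReal) < volume (Metric.closedBall (0:ℂ) r) := by
      rw [Complex.volume_closedBall]
      calc (n:ENNReal) = ENNReal.ofReal (n:ℝ) := (ENNReal.ofReal_natCast n).symm
        _ < ENNReal.ofReal (((n:ℝ)+1)^2 * Real.pi) := by
            rw [ENNReal.ofReal_lt_ofReal_iff (by positivity)]
            nlinarith [Real.pi_gt_three]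
        _ ≤ ENNReal.ofReal (r^2 * Real.pi) := by
            refine ENNReal.ofReal_le_ofReal ?_
            have : ((n:ℝ)+1)^2 ≤ r^2 := by nlinarith
            nlinarith [Real.pi_pos]
        _ = ENNReal.ofReal r ^ 2 * NNReal.pi := by
            rw [ENNReal.ofReal_mul (by positivity), ENNReal.ofReal_pow (by linarith),
              ← NNReal.coe_real_pi, ENNReal.ofReal_coe_nnreal]
    exact h1.trans_le (hvol_le s r)
end

section
/- Assume in addition that each ψ_j : ℝ → ℝ is continuous. Then the map γ : ℝ² → ℝ^(n+3) is a topological embedding, i.e. a homeomorphism onto its image (with the subspace topology). -/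
/-- The `(k+1)`-th *order statistic* of a finite multiset of reals: the entry at index `k`
of the list sorted in nondecreasing order (junk value `0` if `k` is out of range). -/
noncomputable def orderStat (s : Multiset ℝ) (k : ℕ) : ℝ := (s.sort (· ≤ ·)).getD k 0

/-- The map `γ : ℝ² → ℝ^{n+3}`, `γ(s,c) = (γ₀(s,c), …, γ_{n+1}(s,c), s)` where
`γ_k(s,c) = {c, ψ 0 s, …, ψ n s}_[k]` is the `(k+1)`-th order statistic. -/
noncomputable def gammaMap (n : ℕ) (ψ : Fin (n+1) → ℝ → ℝ) (p : ℝ × ℝ) :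
    Fin (n+3) → ℝ :=
  fun i => if (i : ℕ) = n + 2 then p.1
    else orderStat (p.2 ::ₘ Finset.univ.val.map (fun j => ψ j p.1)) (i : ℕ)

/-- Entry `k` of the result of inserting `c` into a sorted list, as a min/max formula. -/
lemma getD_orderedInsert (c : ℝ) : ∀ (l : List ℝ), l.Pairwise (· ≤ ·) → ∀ k, k ≤ l.length →
    (l.orderedInsert (· ≤ ·) c).getD k 0 =
      if k = 0 then min c (l.getD 0 c) else max (l.getD (k-1) 0) (min c (l.getD k c)) := by
  intro l
  induction l with
  | nil =>
    intro _ k hk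
    simp only [List.length_nil, Nat.le_zero] at hk
    subst hk
    simp [List.orderedInsert]
  | cons a t ih =>
    intro hs k hk
    rw [List.pairwise_cons] at hs
    obtain ⟨ha, hts⟩ := hs
    have hmem : ∀ j, a ≤ (a :: t).getD j a := by
      intro j
      rcases lt_or_ge j (a :: t).length with hj | hj
      · rw [List.getD_eq_getElem _ _ hj]
        have : (a :: t)[j] ∈ a :: t := List.getElem_mem hj
        rcases List.mem_cons.mp this with h | h
        · exact le_of_eq h.symm
        · exact ha _ h
      · rw [List.getD_eq_default _ _ hj]
    by_cases hba : c ≤ a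
    · rw [List.orderedInsert_cons_of_le (l := t) (h := hba)]
      cases k with
      | zero => simp [min_eq_left hba]
      | succ m =>
        have hm : m < (a :: t).length := hk
        have h1 : c ≤ (a :: t).getD m 0 := by
          rw [List.getD_eq_getElem _ _ hm]
          calc c ≤ a := hba
          _ ≤ (a :: t).getD m a := hmem m
          _ = (a :: t)[m] := List.getD_eq_getElem _ _ hm
        have h2 : c ≤ t.getD m c := by
          rcases lt_or_ge m t.length with hj | hj
          · rw [List.getD_eq_getElem _ _ hj]
            exact hba.trans (ha _ (List.getElem_mem hj))
          · rw [List.getD_eq_default _ _ hj]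
        simp only [List.getD_cons_succ, Nat.succ_ne_zero, if_false, Nat.add_sub_cancel]
        rw [min_eq_left h2, max_eq_left h1]
    · push_neg at hba
      have hins : List.orderedInsert (· ≤ ·) c (a :: t) =
          a :: List.orderedInsert (· ≤ ·) c t := by
        simp [List.orderedInsert, not_le.mpr hba]
      rw [hins]
      cases k with
      | zero => simp [min_eq_right hba.le]
      | succ m =>
        have hm : m ≤ t.length := Nat.succ_le_succ_iff.mp hk
        rw [List.getD_cons_succ, ih hts m hm]
        cases m with
        | zero =>
          have haX : a ≤ min c (t.getD 0 c) := by
            apply le_min hba.le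
            rcases lt_or_ge 0 t.length with hj | hj
            · rw [List.getD_eq_getElem _ _ hj]
              exact ha _ (List.getElem_mem hj)
            · rw [List.getD_eq_default _ _ hj]; exact hba.le
          simp only [if_pos rfl, Nat.succ_ne_zero, if_false, Nat.add_sub_cancel,
            List.getD_cons_zero, List.getD_cons_succ, if_true]
          rw [max_eq_right haX]
        | succ m' =>
          simp [Nat.add_sub_cancel]

lemma sort_cons_eq (n : ℕ) (ψ : Fin (n+1) → ℝ → ℝ) (hord : ∀ s : ℝ, StrictMono fun j => ψ j s)
    (s c : ℝ) :
    (c ::ₘ Finset.univ.val.map (fun j => ψ j s)).sort (· ≤ ·) =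
      List.orderedInsert (· ≤ ·) c (List.ofFn fun j => ψ j s) := by
  have hMl : (Finset.univ.val.map (fun j => ψ j s)) = ((List.ofFn fun j => ψ j s : List ℝ) : Multiset ℝ) := by
    rw [Fin.univ_val_map]
  have hperm : List.Perm ((c ::ₘ Finset.univ.val.map (fun j => ψ j s)).sort (· ≤ ·))
      (List.orderedInsert (· ≤ ·) c (List.ofFn fun j => ψ j s)) := by
    rw [← Multiset.coe_eq_coe]
    rw [Multiset.sort_eq, hMl]
    have := (List.perm_orderedInsert (· ≤ ·) c (List.ofFn fun j => ψ j s))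
    rw [← Multiset.coe_eq_coe] at this
    rw [this]
    simp
  exact List.Perm.eq_of_pairwise' (Multiset.pairwise_sort _ _)
    (List.Pairwise.orderedInsert c _ ((hord s).monotone.sortedLE_ofFn.pairwise)) hperm

/-- Explicit formula for the order statistics. -/
lemma orderStat_formula (n : ℕ) (ψ : Fin (n+1) → ℝ → ℝ)
    (hord : ∀ s : ℝ, StrictMono fun j => ψ j s) (s c : ℝ) (k : ℕ) (hk : k ≤ n + 1) :
    orderStat (c ::ₘ Finset.univ.val.map (fun j => ψ j s)) k =
      if h0 : k = 0 then min c (ψ 0 s)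
      else max (ψ ⟨k-1, by omega⟩ s)
        (if hn : k = n + 1 then c else min c (ψ ⟨k, by omega⟩ s)) := by
  have hlen : (List.ofFn fun j => ψ j s).length = n + 1 := by simp
  rw [orderStat, sort_cons_eq n ψ hord s c,
    getD_orderedInsert c _ ((hord s).monotone.sortedLE_ofFn.pairwise) k (by omega)]
  by_cases h0 : k = 0
  · subst h0
    rw [dif_pos rfl, if_pos rfl,
      List.getD_eq_getElem _ c (by rw [hlen]; omega), List.getElem_ofFn]
    norm_num
  · rw [dif_neg h0, if_neg h0]
    have h1 : (List.ofFn fun j => ψ j s).getD (k-1) 0 = ψ ⟨k-1, by omega⟩ s := by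
      rw [List.getD_eq_getElem _ _ (by rw [hlen]; omega), List.getElem_ofFn]
    rw [h1]
    by_cases hn : k = n + 1
    · rw [dif_pos hn, List.getD_eq_default _ _ (by rw [hlen]; omega), min_self]
    · rw [dif_neg hn, List.getD_eq_getElem _ _ (by rw [hlen]; omega), List.getElem_ofFn]

lemma sum_getD_range (l : List ℝ) : ∑ k ∈ Finset.range l.length, l.getD k 0 = l.sum := by
  induction l with
  | nil => simp
  | cons a t ih =>
    rw [List.length_cons, Finset.sum_range_succ']
    simp only [List.getD_cons_succ, List.getD_cons_zero, List.sum_cons]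
    rw [ih]; ring

/-- If each `ψ j : ℝ → ℝ` is continuous and `ψ 0 s < ⋯ < ψ n s` for every
`s`, then `γ : ℝ² → ℝ^{n+3}` is a topological embedding (a homeomorphism onto its image
with the subspace topology). -/
theorem gammaMap_isEmbedding (n : ℕ) (ψ : Fin (n+1) → ℝ → ℝ)
    (hord : ∀ s : ℝ, StrictMono fun j => ψ j s)
    (hcont : ∀ j, Continuous (ψ j)) :
    Topology.IsEmbedding (gammaMap n ψ) := by
  -- continuity of γ
  have hγ : Continuous (gammaMap n ψ) := by
    apply continuous_pi
    intro i
    by_cases hi : (i : ℕ) = n + 2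
    · simp only [gammaMap, hi, if_pos rfl]
      exact continuous_fst
    · have hk : (i : ℕ) ≤ n + 1 := by have := i.isLt; omega
      have : (fun p : ℝ × ℝ => gammaMap n ψ p i) = fun p =>
          if h0 : (i : ℕ) = 0 then min p.2 (ψ 0 p.1)
          else max (ψ ⟨(i : ℕ)-1, by omega⟩ p.1)
            (if hn : (i : ℕ) = n + 1 then p.2 else min p.2 (ψ ⟨(i : ℕ), by omega⟩ p.1)) := by
        funext p
        rw [gammaMap, if_neg hi, orderStat_formula n ψ hord p.1 p.2 i hk]
      rw [this]
      by_cases h0 : (i : ℕ) = 0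
      · simp only [dif_pos h0]
        exact continuous_snd.min ((hcont 0).comp continuous_fst)
      · simp only [dif_neg h0]
        apply Continuous.max ((hcont _).comp continuous_fst)
        by_cases hn : (i : ℕ) = n + 1
        · simp only [dif_pos hn]; exact continuous_snd
        · simp only [dif_neg hn]
          exact continuous_snd.min ((hcont _).comp continuous_fst)
  -- the retraction
  set r : (Fin (n+3) → ℝ) → ℝ × ℝ := fun y =>
    (y ⟨n+2, by omega⟩,
      (∑ k : Fin (n+2), y ⟨(k : ℕ), by omega⟩) - ∑ j, ψ j (y ⟨n+2, by omega⟩)) with hr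
  have hrcont : Continuous r := by
    apply Continuous.prodMk (continuous_apply _)
    apply Continuous.sub
    · exact continuous_finset_sum _ fun k _ => continuous_apply _
    · exact (continuous_finset_sum _ fun j _ => (hcont j).comp (continuous_apply _))
  have hlinv : ∀ p : ℝ × ℝ, r (gammaMap n ψ p) = p := by
    intro p
    have h1 : gammaMap n ψ p ⟨n+2, by omega⟩ = p.1 := by simp [gammaMap]
    have hlen : ((p.2 ::ₘ Finset.univ.val.map (fun j => ψ j p.1)).sort (· ≤ ·)).length
        = n + 2 := by
      rw [Multiset.length_sort, Multiset.card_cons, Multiset.card_map]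
      simp
    have h2 : (∑ k : Fin (n+2), gammaMap n ψ p ⟨(k : ℕ), by omega⟩)
        = p.2 + ∑ j, ψ j p.1 := by
      have heach : ∀ k : Fin (n+2), gammaMap n ψ p ⟨(k : ℕ), by omega⟩ =
          ((p.2 ::ₘ Finset.univ.val.map (fun j => ψ j p.1)).sort (· ≤ ·)).getD (k : ℕ) 0 := by
        intro k
        rw [gammaMap]
        rw [if_neg (by have := k.isLt; simp; omega)]
        rfl
      rw [Finset.sum_congr rfl (fun k _ => heach k)]
      rw [Fin.sum_univ_eq_sum_range
        (fun m => ((p.2 ::ₘ Finset.univ.val.map fun j => ψ j p.1).sort (· ≤ ·)).getD m 0) (n+2)]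
      rw [← hlen, sum_getD_range]
      have : (((p.2 ::ₘ Finset.univ.val.map (fun j => ψ j p.1)).sort (· ≤ ·) : List ℝ) : Multiset ℝ).sum
          = (p.2 ::ₘ Finset.univ.val.map (fun j => ψ j p.1)).sum := by
        rw [Multiset.sort_eq]
      rw [Multiset.sum_coe] at this
      rw [this, Multiset.sum_cons]
      congr 1
    rw [hr]
    simp only [h1, h2]
    ext <;> simp
  exact Topology.IsEmbedding.of_comp hγ hrcont
    (by rw [show r ∘ gammaMap n ψ = id from funext hlinv]; exact Topology.IsEmbedding.id)
end

section
/- Let ψ_0 < ψ_1 < ⋯ < ψ_n be real numbers, let τ ≥ 0, let k₀ ∈ {0, …, n+1}, and let c ∈ ℝ satisfy ψ_{k₀−1} < c < ψ_{k₀} (with the conventions ψ_{−1} = −∞ and ψ_{n+1} = +∞). Then for every k ∈ {0, …, n+1}: {c + (k₀ − k)·τ, ψ_0, …, ψ_n}_[k] equals ψ_k if k < k₀, equals c if k = k₀, and equals ψ_{k−1} if k > k₀. In particular {c + (k₀ − k)·τ, ψ_0, …, ψ_n}_[k] = {c, ψ_0, …, ψ_n}_[k] for all k. -/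
lemma orderStat_sort_aux (n : ℕ) (ψ : Fin (n+1) → ℝ) (hψ : StrictMono ψ)
    (x : ℝ) (m : ℕ)
    (hlt : ∀ j : Fin (n+1), (j:ℕ) < m → ψ j < x)
    (hle : ∀ j : Fin (n+1), m ≤ (j:ℕ) → x ≤ ψ j) :
    ((x ::ₘ Finset.univ.val.map ψ).sort (· ≤ ·))
      = (List.ofFn ψ).take m ++ x :: (List.ofFn ψ).drop m := by
  set l := List.ofFn ψ with hl
  have hlen : l.length = n + 1 := by simp [hl]
  have hmemtake : ∀ a ∈ l.take m, a < x := by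
    intro a ha
    rw [List.mem_iff_getElem] at ha
    obtain ⟨i, hi, rfl⟩ := ha
    have hi' : i < m := lt_of_lt_of_le hi (by simp [hlen])
    have him : i < n + 1 := by
      rw [List.length_take, hlen] at hi
      omega
    rw [List.getElem_take]
    simp only [hl, List.getElem_ofFn]
    exact hlt _ hi'
  have hmemdrop : ∀ a ∈ l.drop m, x ≤ a := by
    intro a ha
    rw [List.mem_iff_getElem] at ha
    obtain ⟨i, hi, rfl⟩ := ha
    rw [List.getElem_drop]
    simp only [hl, List.getElem_ofFn]
    exact hle _ (by simp)
  have hsorted : List.Pairwise (· ≤ ·) l := by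
    rw [hl, ← List.sortedLE_iff_pairwise, List.sortedLE_ofFn_iff]; exact hψ.monotone
  have hLsorted : List.Pairwise (· ≤ ·) (l.take m ++ x :: l.drop m) := by
    rw [List.pairwise_append]
    refine ⟨(hsorted.sublist (List.take_sublist _ _)), ?_, ?_⟩
    · rw [List.pairwise_cons]
      exact ⟨hmemdrop, hsorted.sublist (List.drop_sublist _ _)⟩
    · intro a ha b hb
      rcases List.mem_cons.mp hb with rfl | hb
      · exact (hmemtake a ha).le
      · exact le_trans (hmemtake a ha).le (hmemdrop b hb)
  refine List.Perm.eq_of_pairwise' (Multiset.pairwise_sort _ _) hLsorted ?_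
  rw [← Multiset.coe_eq_coe, Multiset.sort_eq, Fin.univ_val_map, ← hl]
  rw [show (↑(l.take m ++ x :: l.drop m) : Multiset ℝ) = ↑(x :: (l.take m ++ l.drop m)) from
    Multiset.coe_eq_coe.mpr List.perm_middle, List.take_append_drop]
  rfl

lemma orderStat_insert (n : ℕ) (ψ : Fin (n+1) → ℝ) (hψ : StrictMono ψ)
    (x : ℝ) (m : ℕ) (hm : m ≤ n+1)
    (hlt : ∀ j : Fin (n+1), (j:ℕ) < m → ψ j < x)
    (hle : ∀ j : Fin (n+1), m ≤ (j:ℕ) → x ≤ ψ j)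
    (k : ℕ) (hk : k ≤ n+1) :
    orderStat (x ::ₘ Finset.univ.val.map ψ) k
      = if h1 : k < m then ψ ⟨k, by omega⟩
        else if h2 : k = m then x
        else ψ ⟨k-1, by omega⟩ := by
  have hsort := orderStat_sort_aux n ψ hψ x m hlt hle
  unfold orderStat
  rw [hsort]
  have hlen : (List.ofFn ψ).length = n + 1 := by simp
  have hlent : ((List.ofFn ψ).take m).length = m := by simp [hlen]; omega
  have hlend : ((List.ofFn ψ).drop m).length = n + 1 - m := by simp [hlen]
  have hLlen : ((List.ofFn ψ).take m ++ x :: (List.ofFn ψ).drop m).length = n + 2 := by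
    simp [hlent, hlend]; omega
  rw [List.getD_eq_getElem _ _ (by omega)]
  rcases lt_trichotomy k m with h | h | h
  · rw [List.getElem_append_left (by omega)]
    simp only [List.getElem_take, List.getElem_ofFn]
    rw [dif_pos h]
  · rcases h with rfl
    rw [List.getElem_append_right (by omega)]
    simp only [hlent, Nat.sub_self, List.getElem_cons_zero]
    rw [dif_neg (by omega)]
    simp
  · rw [List.getElem_append_right (by omega)]
    have h1 : k - ((List.ofFn ψ).take m).length = (k - m - 1) + 1 := by rw [hlent]; omega
    simp only [h1, List.getElem_cons_succ, List.getElem_drop, List.getElem_ofFn]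
    rw [dif_neg (by omega), dif_neg (by omega)]
    congr 1
    ext
    simp; omega

lemma card_below (n : ℕ) (ψ : Fin (n+1) → ℝ) (hψ : StrictMono ψ) (x : ℝ)
    (j : Fin (n+1)) :
    (j:ℕ) < (Finset.univ.filter (fun i : Fin (n+1) => ψ i < x)).card ↔ ψ j < x := by
  classical
  set S := Finset.univ.filter (fun i : Fin (n+1) => ψ i < x) with hS
  constructor
  · intro h
    by_contra hc
    push_neg at hc
    have hsub : S ⊆ Finset.univ.filter (fun i : Fin (n+1) => (i:ℕ) < (j:ℕ)) := by
      intro i hi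
      simp only [hS, Finset.mem_filter, Finset.mem_univ, true_and] at hi ⊢
      have : ψ i < ψ j := lt_of_lt_of_le hi hc
      exact hψ.lt_iff_lt.mp this
    have hcard := Finset.card_le_card hsub
    have hIio : (Finset.univ.filter (fun i : Fin (n+1) => (i:ℕ) < (j:ℕ))).card = (j:ℕ) := by
      simp only [Fin.val_fin_lt]
      rw [show (Finset.filter (fun i => i < j) Finset.univ) = Finset.Iio j by ext i; simp,
        Fin.card_Iio]
    omega
  · intro h
    have hsub : Finset.univ.filter (fun i : Fin (n+1) => (i:ℕ) ≤ (j:ℕ)) ⊆ S := by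
      intro i hi
      simp only [hS, Finset.mem_filter, Finset.mem_univ, true_and] at hi ⊢
      have : ψ i ≤ ψ j := hψ.monotone (by exact_mod_cast hi)
      exact lt_of_le_of_lt this h
    have hcard := Finset.card_le_card hsub
    have hIic : (Finset.univ.filter (fun i : Fin (n+1) => (i:ℕ) ≤ (j:ℕ))).card = (j:ℕ) + 1 := by
      simp only [Fin.val_fin_le]
      rw [show (Finset.filter (fun i => i ≤ j) Finset.univ) = Finset.Iic j by ext i; simp,
        Fin.card_Iic]
    omega

/-- Let `ψ 0 < ⋯ < ψ n`, `τ ≥ 0`, `k₀ ∈ {0, …, n+1}` and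
`ψ (k₀−1) < c < ψ k₀` (conventions `ψ₋₁ = −∞`, `ψ_{n+1} = +∞`, encoded by quantifying
over all indices below/above `k₀`).  Then for every `k ∈ {0, …, n+1}` the order statistic
`{c + (k₀−k)·τ, ψ 0, …, ψ n}_[k]` equals `ψ k` if `k < k₀`, `c` if `k = k₀`, and
`ψ (k−1)` if `k > k₀`; in particular it equals `{c, ψ 0, …, ψ n}_[k]`. -/
theorem orderStat_shift (n : ℕ) (ψ : Fin (n+1) → ℝ) (hψ : StrictMono ψ)
    (τ : ℝ) (hτ : 0 ≤ τ) (k₀ : Fin (n+2)) (c : ℝ)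
    (hlow : ∀ j : Fin (n+1), (j:ℕ) < (k₀:ℕ) → ψ j < c)
    (hhigh : ∀ j : Fin (n+1), (k₀:ℕ) ≤ (j:ℕ) → c < ψ j) :
    (∀ k : Fin (n+2),
      orderStat ((c + (((k₀:ℕ):ℝ) - ((k:ℕ):ℝ)) * τ) ::ₘ Finset.univ.val.map ψ) (k:ℕ)
        = if h1 : (k:ℕ) < (k₀:ℕ) then ψ ⟨(k:ℕ), by omega⟩
          else if h2 : (k:ℕ) = (k₀:ℕ) then c
          else ψ ⟨(k:ℕ) - 1, by omega⟩) ∧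
    (∀ k : Fin (n+2),
      orderStat ((c + (((k₀:ℕ):ℝ) - ((k:ℕ):ℝ)) * τ) ::ₘ Finset.univ.val.map ψ) (k:ℕ)
        = orderStat (c ::ₘ Finset.univ.val.map ψ) (k:ℕ)) := by
  classical
  have hk₀ : (k₀:ℕ) ≤ n + 1 := by omega
  have main : ∀ k : Fin (n+2),
      orderStat ((c + (((k₀:ℕ):ℝ) - ((k:ℕ):ℝ)) * τ) ::ₘ Finset.univ.val.map ψ) (k:ℕ)
        = if h1 : (k:ℕ) < (k₀:ℕ) then ψ ⟨(k:ℕ), by omega⟩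
          else if h2 : (k:ℕ) = (k₀:ℕ) then c
          else ψ ⟨(k:ℕ) - 1, by omega⟩ := by
    intro k
    have hk : (k:ℕ) ≤ n + 1 := by omega
    set x := c + (((k₀:ℕ):ℝ) - ((k:ℕ):ℝ)) * τ with hx
    set m := (Finset.univ.filter (fun i : Fin (n+1) => ψ i < x)).card with hmdef
    have hm : m ≤ n + 1 := by
      have := Finset.card_filter_le (Finset.univ : Finset (Fin (n+1)))
        (fun i : Fin (n+1) => ψ i < x)
      simpa using this
    have hchar : ∀ j : Fin (n+1), (j:ℕ) < m ↔ ψ j < x := fun j => card_below n ψ hψ x j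
    have hlt : ∀ j : Fin (n+1), (j:ℕ) < m → ψ j < x := fun j hj => (hchar j).mp hj
    have hle : ∀ j : Fin (n+1), m ≤ (j:ℕ) → x ≤ ψ j := by
      intro j hj
      by_contra hc
      push_neg at hc
      have := (hchar j).mpr hc
      omega
    rw [orderStat_insert n ψ hψ x m hm hlt hle (k:ℕ) hk]
    rcases lt_trichotomy (k:ℕ) (k₀:ℕ) with h | h | h
    · have hcx : c ≤ x := by
        have h1 : ((k:ℕ):ℝ) ≤ ((k₀:ℕ):ℝ) := by exact_mod_cast h.le
        nlinarith [mul_nonneg (by linarith : (0:ℝ) ≤ ((k₀:ℕ):ℝ) - ((k:ℕ):ℝ)) hτ]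
      have hkn : (k:ℕ) < n + 1 := by omega
      have hkm : (k:ℕ) < m :=
        (hchar ⟨(k:ℕ), hkn⟩).mpr (lt_of_lt_of_le (hlow ⟨(k:ℕ), hkn⟩ h) hcx)
      rw [dif_pos hkm, dif_pos h]
    · have hx0 : x = c := by rw [hx, h]; ring
      have hmk : m = (k₀:ℕ) := by
        by_contra hne
        rcases lt_or_gt_of_ne hne with hlt' | hgt
        · have hmn : m < n + 1 := by omega
          have h1 : ψ ⟨m, hmn⟩ < c := hlow ⟨m, hmn⟩ hlt'
          have h2 : (m:ℕ) < m := (hchar ⟨m, hmn⟩).mpr (by rw [hx0]; exact h1)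
          omega
        · have hk0n : (k₀:ℕ) < n + 1 := by omega
          have h1 : ψ ⟨(k₀:ℕ), hk0n⟩ < x := (hchar ⟨(k₀:ℕ), hk0n⟩).mp hgt
          have h2 : c < ψ ⟨(k₀:ℕ), hk0n⟩ := hhigh ⟨(k₀:ℕ), hk0n⟩ (le_refl _)
          rw [hx0] at h1
          linarith
      rw [dif_neg (by omega), dif_pos (by omega), dif_neg (by omega), dif_pos h, hx0]
    · have hxc : x ≤ c := by
        have h1 : ((k₀:ℕ):ℝ) ≤ ((k:ℕ):ℝ) := by exact_mod_cast h.le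
        nlinarith [mul_nonpos_of_nonpos_of_nonneg
          (by linarith : ((k₀:ℕ):ℝ) - ((k:ℕ):ℝ) ≤ 0) hτ]
      have hmk : m ≤ (k₀:ℕ) := by
        by_contra hgt
        push_neg at hgt
        have hk0n : (k₀:ℕ) < n + 1 := by omega
        have h1 : ψ ⟨(k₀:ℕ), hk0n⟩ < x := (hchar ⟨(k₀:ℕ), hk0n⟩).mp hgt
        have h2 : c < ψ ⟨(k₀:ℕ), hk0n⟩ := hhigh ⟨(k₀:ℕ), hk0n⟩ (le_refl _)
        linarith
      rw [dif_neg (by omega), dif_neg (by omega), dif_neg (by omega), dif_neg (by omega)]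
  refine ⟨main, fun k => ?_⟩
  rw [main k]
  have hk : (k:ℕ) ≤ n + 1 := by omega
  rw [orderStat_insert n ψ hψ c (k₀:ℕ) hk₀ hlow (fun j hj => (hhigh j hj).le) (k:ℕ) hk]
end

section
/- Let ψ_0 < ψ_1 < ⋯ < ψ_n be real numbers, let τ ≥ 0, let 0 ≤ k₀ ≤ n, and let c ∈ [k₀·τ + ψ_{k₀}, (k₀+1)·τ + ψ_{k₀}]. Then for every k ∈ {0, …, n+1}: {c − k·τ, ψ_0, …, ψ_n}_[k] = ψ_k if k ≤ k₀, and {c − k·τ, ψ_0, …, ψ_n}_[k] = ψ_{k−1} if k₀ + 1 ≤ k ≤ n+1. Consequently the vector ({c − k·τ, ψ_0, …, ψ_n}_[k])_{k=0}^{n+1} equals the corner point (ψ_0, …, ψ_{k₀}, ψ_{k₀}, ψ_{k₀+1}, …, ψ_n). -/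
lemma getD_orderedInsert_of_lt (x : ℝ) :
    ∀ (L : List ℝ) (k : ℕ), (∀ i, i < k → i < L.length → L.getD i 0 < x) →
      k < L.length → L.getD k 0 ≤ x →
      (L.orderedInsert (· ≤ ·) x).getD k 0 = L.getD k 0
  | [], k, _, hk, _ => by simp at hk
  | a :: t, k, hlt, hk, hle => by
    rw [List.orderedInsert]
    split_ifs with h
    · match k with
      | 0 => simp_all; linarith
      | k+1 =>
        have : a < x := by simpa using hlt 0 (by omega) (by simp)
        linarith
    · match k with
      | 0 => rfl
      | k+1 =>
        simp only [List.getD_cons_succ]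
        exact getD_orderedInsert_of_lt x t k
          (fun i hi hi' => hlt (i+1) (by omega) (by simpa using hi'))
          (by simpa using hk) (by simpa using hle)

lemma getD_orderedInsert_of_ge (x : ℝ) :
    ∀ (L : List ℝ) (k : ℕ), L.Pairwise (· ≤ ·) → 1 ≤ k → k ≤ L.length →
      x ≤ L.getD (k-1) 0 →
      (L.orderedInsert (· ≤ ·) x).getD k 0 = L.getD (k-1) 0
  | [], k, _, h1, hk, _ => by simp at hk; omega
  | a :: t, k, hs, h1, hk, hle => by
    rw [List.orderedInsert]
    split_ifs with h
    · match k with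
      | k+1 => simp
    · match k with
      | 1 =>
        exact absurd hle h
      | k+2 =>
        simp only [List.getD_cons_succ, Nat.add_sub_cancel] at *
        have := getD_orderedInsert_of_ge x t (k+1) hs.of_cons (by omega)
          (by simpa using hk) (by simpa using hle)
        simpa using this

lemma sort_cons_coe (x : ℝ) (L : List ℝ) (hL : L.Pairwise (· ≤ ·)) :
    Multiset.sort (x ::ₘ (L : Multiset ℝ)) (· ≤ ·) = L.orderedInsert (· ≤ ·) x := by
  refine List.Perm.eq_of_pairwise' (Multiset.pairwise_sort _ _)
    (hL.orderedInsert x L) ?_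
  rw [← Multiset.coe_eq_coe, Multiset.sort_eq]
  rw [show ((L.orderedInsert (· ≤ ·) x : List ℝ) : Multiset ℝ) = ↑(x :: L) from
    Multiset.coe_eq_coe.2 (List.perm_orderedInsert _ _ _)]
  rfl


/-- Let `ψ 0 < ⋯ < ψ n`, `τ ≥ 0`, `0 ≤ k₀ ≤ n`, and
`c ∈ [k₀·τ + ψ k₀, (k₀+1)·τ + ψ k₀]`.  Then `{c − k·τ, ψ 0, …, ψ n}_[k] = ψ k` for
`k ≤ k₀` and `= ψ (k−1)` for `k₀+1 ≤ k ≤ n+1`; consequently the vector of these order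
statistics is the corner point `(ψ 0, …, ψ k₀, ψ k₀, ψ (k₀+1), …, ψ n)`. -/
theorem orderStat_collapse (n : ℕ) (ψ : Fin (n+1) → ℝ) (hψ : StrictMono ψ)
    (τ : ℝ) (hτ : 0 ≤ τ) (k₀ : Fin (n+1)) (c : ℝ)
    (hc1 : ((k₀:ℕ):ℝ) * τ + ψ k₀ ≤ c)
    (hc2 : c ≤ (((k₀:ℕ):ℝ) + 1) * τ + ψ k₀) :
    (∀ k : Fin (n+2),
      orderStat ((c - ((k:ℕ):ℝ) * τ) ::ₘ Finset.univ.val.map ψ) (k:ℕ)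
        = if h : (k:ℕ) ≤ (k₀:ℕ) then ψ ⟨(k:ℕ), by omega⟩
          else ψ ⟨(k:ℕ) - 1, by omega⟩) ∧
    (fun k : Fin (n+2) =>
        orderStat ((c - ((k:ℕ):ℝ) * τ) ::ₘ Finset.univ.val.map ψ) (k:ℕ))
      = Fin.insertNth k₀.castSucc (ψ k₀) ψ := by
  set L : List ℝ := List.ofFn ψ with hLdef
  have hLs : L.Pairwise (· ≤ ·) := hψ.monotone.sortedLE_ofFn.pairwise
  have hlen : L.length = n + 1 := by simp [hLdef]
  have hget : ∀ i (hi : i < n + 1), L.getD i 0 = ψ ⟨i, hi⟩ := by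
    intro i hi
    rw [List.getD_eq_getElem L 0 (by omega)]
    simp only [hLdef, List.getElem_ofFn]
  have main : ∀ k : Fin (n+2),
      orderStat ((c - ((k:ℕ):ℝ) * τ) ::ₘ Finset.univ.val.map ψ) (k:ℕ)
        = if h : (k:ℕ) ≤ (k₀:ℕ) then ψ ⟨(k:ℕ), by omega⟩
          else ψ ⟨(k:ℕ) - 1, by omega⟩ := by
    intro k
    set x : ℝ := c - ((k:ℕ):ℝ) * τ with hxdef
    rw [Fin.univ_val_map]
    unfold orderStat
    rw [sort_cons_coe x L hLs]
    have hkn : (k:ℕ) < n + 2 := k.isLt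
    have hk₀n : (k₀:ℕ) < n + 1 := k₀.isLt
    split_ifs with h
    · -- k ≤ k₀, so x ≥ ψ k₀
      have hcast : ((k:ℕ):ℝ) ≤ ((k₀:ℕ):ℝ) := by exact_mod_cast h
      have hmul : ((k:ℕ):ℝ) * τ ≤ ((k₀:ℕ):ℝ) * τ :=
        mul_le_mul_of_nonneg_right hcast hτ
      have hx : ψ k₀ ≤ x := by rw [hxdef]; linarith
      rw [getD_orderedInsert_of_lt x L (k:ℕ)]
      · exact hget _ (by omega)
      · intro i hik hiL
        rw [hget i (by rw [hlen] at hiL; omega)]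
        have h1 : ψ ⟨i, by rw [hlen] at hiL; omega⟩ < ψ ⟨(k:ℕ), by omega⟩ :=
          hψ (by simpa [Fin.lt_def] using hik)
        have h2 : ψ ⟨(k:ℕ), by omega⟩ ≤ ψ k₀ :=
          hψ.monotone (by simpa [Fin.le_def] using h)
        linarith
      · omega
      · rw [hget _ (by omega)]
        exact le_trans (hψ.monotone (by simpa [Fin.le_def] using h)) hx
    · -- k₀ < k, so x ≤ ψ k₀
      have hk : (k₀:ℕ) + 1 ≤ (k:ℕ) := by omega
      have hcast : ((k₀:ℕ):ℝ) + 1 ≤ ((k:ℕ):ℝ) := by exact_mod_cast hk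
      have hmul : (((k₀:ℕ):ℝ) + 1) * τ ≤ ((k:ℕ):ℝ) * τ :=
        mul_le_mul_of_nonneg_right hcast hτ
      have hx : x ≤ ψ k₀ := by rw [hxdef]; linarith
      have hk1 : (k:ℕ) - 1 < n + 1 := by omega
      rw [getD_orderedInsert_of_ge x L (k:ℕ) hLs (by omega) (by omega)]
      · exact hget _ hk1
      · rw [hget _ hk1]
        exact le_trans hx (hψ.monotone (by simp [Fin.le_def]; omega))
  refine ⟨main, ?_⟩
  funext k
  rw [main k]
  rcases lt_trichotomy k k₀.castSucc with hlt | heq | hgt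
  · rw [Fin.insertNth_apply_below hlt]
    have hk : (k:ℕ) < (k₀:ℕ) := by simpa [Fin.lt_def] using hlt
    rw [dif_pos (by omega)]
    simp only [eq_rec_constant]
    congr 1
  · subst heq
    rw [Fin.insertNth_apply_same]
    rw [dif_pos (by simp)]
    congr 1
  · rw [Fin.insertNth_apply_above hgt]
    have hk : (k₀:ℕ) < (k:ℕ) := by simpa [Fin.lt_def] using hgt
    rw [dif_neg (by omega)]
    simp only [eq_rec_constant]
    congr 1
end

section
/- The image of F over all pairs (x, y) with x ∈ (Λ^×)^(n+2), y ∈ Λ^× and ∏_{j=0}^{n+1} x_j = 1 + y equals the image of γ, i.e. {F(x,y) : ∏_j x_j = 1 + y} = {γ(s,c) : (s,c) ∈ ℝ²}. -/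
/-- The Novikov field `Λ = ℂ((T^ℝ))`, modeled by Hahn series. -/
abbrev Nov : Type := HahnSeries ℝ ℂ

/-- The additive valuation `val : Λ → ℝ` (the order of a nonzero Hahn series;
junk value at `0`). -/
noncomputable def val (x : Nov) : ℝ := x.order

/-- The tropically continuous fibration `F` in homogeneous coordinates:
`F_k(x,y) = {Σ_j (j−k)·val(x_j) + k·min(0, val y), ψ 0 (val y), …, ψ n (val y)}_[k]`
for `0 ≤ k ≤ n+1`, and last component `val y`. -/
noncomputable def Fmap (n : ℕ) (ψ : Fin (n+1) → ℝ → ℝ)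
    (x : Fin (n+2) → Nov) (y : Nov) : Fin (n+3) → ℝ :=
  fun i => if (i : ℕ) = n + 2 then val y
    else orderStat
      (((∑ j : Fin (n+2), (((j:ℕ):ℝ) - ((i:ℕ):ℝ)) * val (x j))
          + ((i:ℕ):ℝ) * min 0 (val y))
        ::ₘ Finset.univ.val.map (fun j => ψ j (val y))) (i : ℕ)

/- ## Auxiliary lemmas -/

lemma orderStat_eq_of_counts (N : Multiset ℝ) (k : ℕ) (v : ℝ)
    (h1 : N.countP (· < v) ≤ k) (h2 : k < N.countP (· ≤ v)) :
    orderStat N k = v := by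
  classical
  set l := N.sort (· ≤ ·) with hl
  have hsort : l.Pairwise (· ≤ ·) := N.pairwise_sort _
  have hcoe : (l : Multiset ℝ) = N := N.sort_eq _
  have hlt : N.countP (· < v) = l.countP (fun x => decide (x < v)) := by rw [← hcoe]; rfl
  have hle : N.countP (· ≤ v) = l.countP (fun x => decide (x ≤ v)) := by rw [← hcoe]; rfl
  have hcard : k < l.length := lt_of_lt_of_le (hle ▸ h2) (l.countP_le_length)
  have hget : orderStat N k = l[k] := List.getD_eq_getElem l 0 hcard
  rw [hget]
  have hmono : ∀ i j : ℕ, (hi : i < l.length) → (hj : j < l.length) → i ≤ j → l[i] ≤ l[j] := by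
    intro i j hi hj hij
    exact hsort.rel_get_of_le (a := ⟨i, hi⟩) (b := ⟨j, hj⟩) hij
  rcases lt_trichotomy l[k] v with h | h | h
  · exfalso
    have htake : (l.take (k+1)).countP (fun x => decide (x < v)) = (l.take (k+1)).length := by
      rw [List.countP_eq_length]
      intro a ha
      obtain ⟨i, hi, rfl⟩ := List.mem_iff_getElem.1 ha
      rw [List.getElem_take]
      have hik : i < k + 1 := lt_of_lt_of_le hi (by simp [List.length_take])
      simpa using lt_of_le_of_lt (hmono i k (lt_of_lt_of_le hik hcard) hcard (Nat.lt_succ_iff.1 hik)) h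
    have hlen : (l.take (k+1)).length = k + 1 := by
      rw [List.length_take]; omega
    have := (l.take_sublist (k+1)).countP_le (p := fun x => decide (x < v))
    omega
  · exact h
  · exfalso
    have hdrop : (l.drop k).countP (fun x => decide (x ≤ v)) = 0 := by
      rw [List.countP_eq_zero]
      intro a ha
      obtain ⟨i, hi, rfl⟩ := List.mem_iff_getElem.1 ha
      have hki : k + i < l.length := by simp [List.length_drop] at hi; omega
      rw [List.getElem_drop]
      have : l[k] ≤ l[k + i] := hmono k (k+i) hcard hki (Nat.le_add_right _ _)
      simp only [decide_eq_true_eq, not_le]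
      exact lt_of_lt_of_le h this
    have hsplit : l.countP (fun x => decide (x ≤ v))
        = (l.take k).countP (fun x => decide (x ≤ v)) + (l.drop k).countP (fun x => decide (x ≤ v)) := by
      rw [← List.countP_append, List.take_append_drop]
    have : (l.take k).countP (fun x => decide (x ≤ v)) ≤ k :=
      le_trans ((l.take k).countP_le_length) (by simp [List.length_take])
    omega

lemma card_filter_coe_lt (m t : ℕ) (ht : t ≤ m) :
    ((Finset.univ : Finset (Fin m)).filter (fun j : Fin m => (j:ℕ) < t)).card = t := by
  have he : ((Finset.univ : Finset (Fin m)).filter (fun j : Fin m => (j:ℕ) < t))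
      = Finset.map (Fin.castLEEmb ht) Finset.univ := by
    ext j
    simp only [Finset.mem_filter, Finset.mem_univ, true_and, Finset.mem_map, Fin.castLEEmb,
      Function.Embedding.coeFn_mk]
    constructor
    · intro hj
      exact ⟨⟨(j:ℕ), hj⟩, by ext; simp [Fin.castLE]⟩
    · rintro ⟨a, rfl⟩
      simpa using a.isLt
  rw [he, Finset.card_map, Finset.card_univ, Fintype.card_fin]

lemma countP_map_univ {n : ℕ} (f : Fin (n+1) → ℝ) (p : ℝ → Prop) [DecidablePred p]
    (t : ℕ) (ht : t ≤ n+1) (hiff : ∀ j, p (f j) ↔ (j:ℕ) < t) :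
    (Finset.univ.val.map f).countP p = t := by
  rw [Multiset.countP_map]
  have : (Finset.univ.val.filter fun j => p (f j))
      = ((Finset.univ : Finset (Fin (n+1))).filter (fun j : Fin (n+1) => (j:ℕ) < t)).val := by
    rw [Finset.filter_val]
    exact Multiset.filter_congr (fun j _ => by simpa using hiff j)
  rw [this]
  exact card_filter_coe_lt _ _ ht

lemma countP_map_univ_le {n : ℕ} (f : Fin (n+1) → ℝ) (p q : ℝ → Prop)
    [DecidablePred p] [DecidablePred q] (hpq : ∀ x, p x → q x) :
    (Finset.univ.val.map f).countP p ≤ (Finset.univ.val.map f).countP q := by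
  rw [Multiset.countP_eq_card_filter, Multiset.countP_eq_card_filter]
  exact Multiset.card_le_card (Multiset.monotone_filter_right _ (fun a ha => hpq a ha))

lemma val_prod {m : ℕ} (x : Fin m → Nov) (hx : ∀ j, x j ≠ 0) :
    val (∏ j, x j) = ∑ j, val (x j) := by
  induction m with
  | zero => simp [val]
  | succ m ih =>
    rw [Fin.prod_univ_succ, Fin.sum_univ_succ]
    have hprod : (∏ j : Fin m, x j.succ) ≠ 0 :=
      Finset.prod_ne_zero_iff.2 fun j _ => hx j.succ
    have := HahnSeries.order_mul (hx 0) hprod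
    simp only [val] at *
    rw [this, ih (fun j => x j.succ) (fun j => hx j.succ)]

lemma two_single (s : ℝ) : (HahnSeries.single s (1:ℂ)) + HahnSeries.single s (1:ℂ)
    = HahnSeries.single s (2:ℂ) := by
  ext g
  rw [HahnSeries.coeff_add]
  by_cases h : g = s <;> simp [HahnSeries.coeff_single, h]
  norm_num

lemma orderTop_one_add_single (s : ℝ) :
    (1 + HahnSeries.single s (1:ℂ)).orderTop = ((min 0 s : ℝ) : WithTop ℝ) := by
  rcases lt_trichotomy s 0 with h | h | h
  · rw [min_eq_right h.le, add_comm, HahnSeries.orderTop_add_eq_left]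
    · exact HahnSeries.orderTop_single one_ne_zero
    · rw [HahnSeries.orderTop_single one_ne_zero, HahnSeries.orderTop_one]
      exact_mod_cast h
  · subst h
    rw [← HahnSeries.single_zero_one, two_single]
    rw [HahnSeries.orderTop_single (by norm_num : (2:ℂ) ≠ 0)]
    simp
  · rw [min_eq_left h.le, HahnSeries.orderTop_add_eq_left]
    · exact HahnSeries.orderTop_one
    · rw [HahnSeries.orderTop_single one_ne_zero, HahnSeries.orderTop_one]
      exact_mod_cast h

lemma one_add_single_ne_zero (s : ℝ) : (1 + HahnSeries.single s (1:ℂ)) ≠ 0 := by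
  rw [← HahnSeries.orderTop_ne_top, orderTop_one_add_single]
  exact WithTop.coe_ne_top

lemma val_one_add_single (s : ℝ) : val (1 + HahnSeries.single s (1:ℂ)) = min 0 s := by
  have h1 := HahnSeries.order_eq_orderTop_of_ne_zero (one_add_single_ne_zero s)
  rw [orderTop_one_add_single] at h1
  exact_mod_cast h1

lemma prod_construction (n : ℕ) (s c : ℝ) :
    (∏ j : Fin (n+2), (if j = 0 then (1 + HahnSeries.single s (1:ℂ)) * HahnSeries.single (-c) (1:ℂ)
      else if j = 1 then HahnSeries.single c (1:ℂ) else 1))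
    = 1 + HahnSeries.single s (1:ℂ) := by
  rw [Fin.prod_univ_succ, Fin.prod_univ_succ]
  have h1 : ((0 : Fin (n+1)).succ : Fin (n+2)) = 1 := Fin.succ_zero_eq_one
  have h2 : ∀ j : Fin n, (j.succ.succ : Fin (n+2)) ≠ 0 := fun j => Fin.succ_ne_zero _
  have h3 : ∀ j : Fin n, (j.succ.succ : Fin (n+2)) ≠ 1 := by
    intro j hj
    rw [← Fin.succ_zero_eq_one] at hj
    exact Fin.succ_ne_zero _ (Fin.succ_injective _ hj)
  rw [if_pos rfl, h1, if_neg one_ne_zero, if_pos rfl]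
  rw [Finset.prod_congr rfl (fun j _ => by rw [if_neg (h2 j), if_neg (h3 j)])]
  rw [Finset.prod_const_one, mul_one, mul_assoc, HahnSeries.single_mul_single]
  norm_num [HahnSeries.single_zero_one]

/-- The image of `F` over all pairs `(x,y)` with `x ∈ (Λ^×)^{n+2}`,
`y ∈ Λ^×` and `∏_j x_j = 1 + y` equals the image of `γ`. -/
theorem Fmap_image_eq_gamma_image (n : ℕ) (ψ : Fin (n+1) → ℝ → ℝ)
    (hord : ∀ s : ℝ, StrictMono fun j => ψ j s) :
    {p : Fin (n+3) → ℝ | ∃ (x : Fin (n+2) → Nov) (y : Nov),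
        (∀ j, x j ≠ 0) ∧ y ≠ 0 ∧ (∏ j, x j) = 1 + y ∧ p = Fmap n ψ x y}
      = Set.range (gammaMap n ψ) := by
  classical
  ext p
  simp only [Set.mem_setOf_eq, Set.mem_range]
  constructor
  · -- Forward direction
    rintro ⟨x, y, hx, hy, hprodeq, rfl⟩
    set s := val y with hs
    set m := min 0 s with hm
    set V := ∑ j, val (x j) with hV
    set A := ∑ j : Fin (n+2), ((j:ℕ):ℝ) * val (x j) with hA
    -- the valuation inequality
    have hprodne : (∏ j, x j) ≠ 0 := Finset.prod_ne_zero_iff.2 fun j _ => hx j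
    have hVm : m ≤ V := by
      have h1 : V = val (1 + y) := by
        rw [← hprodeq, val_prod x hx]
      have h2 : min (val (1:Nov)) (val y) ≤ val (1 + y) := by
        have := HahnSeries.min_order_le_order_add (x := (1:Nov)) (y := y)
          (by rw [← hprodeq]; exact hprodne)
        exact this
      rw [h1, hm, hs]
      simpa [val] using h2
    -- the head sequence
    set a : ℕ → ℝ := fun k => A - (k:ℝ) * (V - m) with hadef
    have hsum : ∀ k : ℕ,
        (∑ j : Fin (n+2), (((j:ℕ):ℝ) - (k:ℝ)) * val (x j)) + (k:ℝ) * m = a k := by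
      intro k
      have : ∀ j : Fin (n+2), (((j:ℕ):ℝ) - (k:ℝ)) * val (x j)
          = ((j:ℕ):ℝ) * val (x j) - (k:ℝ) * val (x j) := by
        intro j; ring
      rw [Finset.sum_congr rfl (fun j _ => this j), Finset.sum_sub_distrib, ← Finset.mul_sum]
      rw [hadef, ← hA, ← hV]; ring
    have hamono : ∀ k k' : ℕ, k ≤ k' → a k' ≤ a k := by
      intro k k' hkk
      have h1 : (k:ℝ) ≤ (k':ℝ) := by exact_mod_cast hkk
      have h2 : (0:ℝ) ≤ V - m := by linarith
      simp only [hadef]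
      nlinarith
    -- the crossing index
    set P : ℕ → Prop := fun k => ∀ j : Fin (n+1), (j:ℕ) < k → ψ j s < a k with hP
    set K := Nat.findGreatest P (n+1) with hK
    have hPK : P K := Nat.findGreatest_spec (Nat.zero_le _)
      (fun j hj => absurd hj (Nat.not_lt_zero _))
    have hKle : K ≤ n + 1 := Nat.findGreatest_le _
    have hnot : ∀ k, K < k → k ≤ n+1 → ∃ j : Fin (n+1), (j:ℕ) < k ∧ a k ≤ ψ j s := by
      intro k hKk hkn
      have := Nat.findGreatest_is_greatest hKk hkn
      simp only [hP] at this
      push_neg at this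
      obtain ⟨j, hj1, hj2⟩ := this
      exact ⟨j, hj1, hj2⟩
    -- monotonicity of ψ
    have hψlt : ∀ i j : Fin (n+1), (i:ℕ) < (j:ℕ) → ψ i s < ψ j s := by
      intro i j hij
      exact hord s hij
    have hψle : ∀ i j : Fin (n+1), (i:ℕ) ≤ (j:ℕ) → ψ i s ≤ ψ j s := by
      intro i j hij
      exact (hord s).monotone hij
    -- the constant c
    set c : ℝ := min (a K) (if h : K < n+1 then ψ ⟨K, h⟩ s else a K) with hc
    have hcA : c ≤ a K := min_le_left _ _
    have hcψK : ∀ h : K < n+1, c ≤ ψ ⟨K, h⟩ s := by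
      intro h
      rw [hc, dif_pos h]
      exact min_le_right _ _
    have hψc : ∀ j : Fin (n+1), (j:ℕ) < K → ψ j s < c := by
      intro j hj
      by_cases h : K < n+1
      · rw [hc, dif_pos h, lt_min_iff]
        exact ⟨hPK j hj, hψlt j ⟨K, h⟩ hj⟩
      · rw [hc, dif_neg h, min_self]
        exact hPK j hj
    -- counts in M
    set M := (Finset.univ.val.map fun j => ψ j s) with hM
    have hMlt_k : ∀ (t : ℕ) (ht : t < n+1), M.countP (· < ψ ⟨t,ht⟩ s) = t := by
      intro t ht
      exact countP_map_univ _ _ t (le_of_lt ht) (fun j => by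
        constructor
        · intro hlt
          by_contra hge
          exact absurd hlt (not_lt.2 (hψle ⟨t,ht⟩ j (le_of_not_gt hge)))
        · intro hlt; exact hψlt j ⟨t,ht⟩ hlt)
    have hMle_k : ∀ (t : ℕ) (ht : t < n+1), M.countP (· ≤ ψ ⟨t,ht⟩ s) = t + 1 := by
      intro t ht
      exact countP_map_univ _ _ (t+1) ht (fun j => by
        constructor
        · intro hlej
          by_contra hge
          have : (t:ℕ) < (j:ℕ) := by omega
          exact absurd hlej (not_le.2 (hψlt ⟨t,ht⟩ j this))
        · intro hlt
          exact hψle j ⟨t,ht⟩ (Nat.lt_succ_iff.mp hlt))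
    have hMltc : M.countP (· < c) = K := by
      apply countP_map_univ _ _ K hKle
      intro j
      constructor
      · intro hlt
        by_contra hge
        have hKn : K < n+1 := lt_of_le_of_lt (le_of_not_gt hge) j.isLt
        have : c ≤ ψ j s := le_trans (hcψK hKn) (hψle ⟨K, hKn⟩ j (le_of_not_gt hge))
        exact absurd hlt (not_lt.2 this)
      · intro hlt; exact hψc j hlt
    have hMlec : K ≤ M.countP (· ≤ c) := by
      rw [← hMltc]
      exact countP_map_univ_le _ _ _ (fun x hx => le_of_lt hx)
    -- the cons-count tool
    have hcons : ∀ (w v : ℝ) (k : ℕ),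
        (M.countP (· < v) + (if w < v then 1 else 0) ≤ k) →
        (k < M.countP (· ≤ v) + (if w ≤ v then 1 else 0)) →
        orderStat (w ::ₘ M) k = v := by
      intro w v k h1 h2
      apply orderStat_eq_of_counts
      · rw [Multiset.countP_cons]; exact h1
      · rw [Multiset.countP_cons]; exact h2
    -- the key claim
    have hkey : ∀ k : ℕ, k ≤ n + 1 → orderStat (a k ::ₘ M) k = orderStat (c ::ₘ M) k := by
      intro k hkn
      rcases lt_trichotomy k K with hlt | rfl | hgt
      · -- k < K : both equal ψ k s
        have hk' : k < n + 1 := lt_of_lt_of_le hlt hKle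
        have hvak : ψ ⟨k, hk'⟩ s < a k :=
          lt_of_lt_of_le (hPK ⟨k, hk'⟩ hlt) (hamono k K (le_of_lt hlt))
        have hvc : ψ ⟨k, hk'⟩ s < c := hψc ⟨k, hk'⟩ hlt
        have e1 : orderStat (a k ::ₘ M) k = ψ ⟨k, hk'⟩ s := by
          apply hcons
          · rw [hMlt_k k hk', if_neg (not_lt.2 hvak.le)]; omega
          · rw [hMle_k k hk']; split <;> omega
        have e2 : orderStat (c ::ₘ M) k = ψ ⟨k, hk'⟩ s := by
          apply hcons
          · rw [hMlt_k k hk', if_neg (not_lt.2 hvc.le)]; omega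
          · rw [hMle_k k hk']; split <;> omega
        rw [e1, e2]
      · -- k = K : both equal c
        have e2 : orderStat (c ::ₘ M) K = c := by
          apply hcons
          · rw [hMltc, if_neg (lt_irrefl c)]; omega
          · rw [if_pos (le_refl c)]; omega
        have e1 : orderStat (a K ::ₘ M) K = c := by
          apply hcons
          · rw [hMltc, if_neg (not_lt.2 hcA)]; omega
          · rcases le_or_gt (a K) c with hle | hltc
            · rw [if_pos hle]; omega
            · -- then c = ψ K s and K < n+1
              have hKn : K < n + 1 := by
                by_contra hKn
                rw [hc, dif_neg hKn, min_self] at hltc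
                exact lt_irrefl _ hltc
              have hceq : c = ψ ⟨K, hKn⟩ s := by
                rw [hc, dif_pos hKn] at hltc ⊢
                rcases min_cases (a K) (ψ ⟨K, hKn⟩ s) with ⟨h1, _⟩ | ⟨h1, _⟩
                · rw [h1] at hltc; exact absurd hltc (lt_irrefl _)
                · exact h1
              have : M.countP (· ≤ c) = K + 1 := by rw [hceq]; exact hMle_k K hKn
              omega
        rw [e1, e2]
      · -- K < k : both equal ψ (k-1) s
        have hk1 : k - 1 < n + 1 := by omega
        have hak : a k ≤ ψ ⟨k-1, hk1⟩ s := by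
          obtain ⟨j, hj1, hj2⟩ := hnot k hgt hkn
          exact le_trans hj2 (hψle j ⟨k-1, hk1⟩ (by exact (by omega : (j:ℕ) ≤ k - 1)))
        have hKn : K < n + 1 := by omega
        have hck : c ≤ ψ ⟨k-1, hk1⟩ s :=
          le_trans (hcψK hKn) (hψle ⟨K, hKn⟩ ⟨k-1, hk1⟩ (by exact (by omega : K ≤ k - 1)))
        have hcount_lt : M.countP (· < ψ ⟨k-1, hk1⟩ s) = k - 1 := hMlt_k (k-1) hk1
        have hcount_le : M.countP (· ≤ ψ ⟨k-1, hk1⟩ s) = k := by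
          have := hMle_k (k-1) hk1
          omega
        have e1 : orderStat (a k ::ₘ M) k = ψ ⟨k-1, hk1⟩ s := by
          apply hcons
          · rw [hcount_lt]; split <;> omega
          · rw [hcount_le, if_pos hak]; omega
        have e2 : orderStat (c ::ₘ M) k = ψ ⟨k-1, hk1⟩ s := by
          apply hcons
          · rw [hcount_lt]; split <;> omega
          · rw [hcount_le, if_pos hck]; omega
        rw [e1, e2]
    -- conclude
    refine ⟨(s, c), ?_⟩
    funext i
    by_cases hi : (i:ℕ) = n + 2
    · simp [Fmap, gammaMap, hi, hs]
    · have hile : (i:ℕ) ≤ n + 1 := by have := i.isLt; omega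
      simp only [Fmap, gammaMap, if_neg hi]
      rw [← hs, ← hm, hsum (i:ℕ), ← hM]
      exact ((hkey (i:ℕ) hile).symm)
  · -- Backward direction
    rintro ⟨⟨s, c⟩, rfl⟩
    set y : Nov := HahnSeries.single s (1:ℂ) with hy
    set x : Fin (n+2) → Nov := fun j =>
      if j = 0 then (1 + y) * HahnSeries.single (-c) (1:ℂ)
      else if j = 1 then HahnSeries.single c (1:ℂ) else 1 with hxdef
    have hvy : val y = s := HahnSeries.order_single one_ne_zero
    have h10 : (1 : Fin (n+2)) ≠ 0 := one_ne_zero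
    have hx0 : x 0 = (1 + y) * HahnSeries.single (-c) (1:ℂ) := by simp [hxdef]
    have hx1 : x 1 = HahnSeries.single c (1:ℂ) := by simp [hxdef, h10]
    have hxr : ∀ j : Fin n, x j.succ.succ = 1 := by
      intro j
      have h2 : (j.succ.succ : Fin (n+2)) ≠ 0 := Fin.succ_ne_zero _
      have h3 : (j.succ.succ : Fin (n+2)) ≠ 1 := by
        intro hj
        rw [← Fin.succ_zero_eq_one] at hj
        exact Fin.succ_ne_zero _ (Fin.succ_injective _ hj)
      simp [hxdef, h2, h3]
    have hx : ∀ j, x j ≠ 0 := by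
      intro j
      simp only [hxdef]
      split
      · exact mul_ne_zero (one_add_single_ne_zero s) (HahnSeries.single_ne_zero one_ne_zero)
      · split
        · exact HahnSeries.single_ne_zero one_ne_zero
        · exact one_ne_zero
    have hprodx : (∏ j, x j) = 1 + y := prod_construction n s c
    have hv0 : val (x 0) = min 0 s - c := by
      rw [hx0]
      rw [val, HahnSeries.order_mul (one_add_single_ne_zero s)
        (HahnSeries.single_ne_zero one_ne_zero)]
      have := val_one_add_single s
      rw [val] at this
      rw [this, HahnSeries.order_single one_ne_zero]
      ring
    have hv1 : val (x 1) = c := by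
      rw [hx1]
      exact HahnSeries.order_single one_ne_zero
    have hsum : ∀ k : ℕ,
        (∑ j : Fin (n+2), (((j:ℕ):ℝ) - (k:ℝ)) * val (x j)) + (k:ℝ) * min 0 s = c := by
      intro k
      rw [Fin.sum_univ_succ, Fin.sum_univ_succ]
      have h1 : ((0 : Fin (n+1)).succ : Fin (n+2)) = 1 := Fin.succ_zero_eq_one
      have hvrest : ∀ j : Fin n, val (x j.succ.succ) = 0 := by
        intro j
        rw [hxr j]
        exact HahnSeries.order_one
      rw [Finset.sum_congr rfl (fun j _ => by rw [hvrest j, mul_zero]),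
        Finset.sum_const_zero, h1, hv0, hv1]
      simp only [Fin.val_zero, Nat.cast_zero, Fin.val_one, Nat.cast_one]
      ring
    refine ⟨x, y, hx, HahnSeries.single_ne_zero one_ne_zero, hprodx, ?_⟩
    funext i
    by_cases hi : (i:ℕ) = n + 2
    · simp [Fmap, gammaMap, hi, hvy]
    · simp only [Fmap, gammaMap, if_neg hi]
      rw [hvy, hsum (i:ℕ)]
end

section
/- Fix 1 ≤ i ≤ n and let D_i be the set of pairs (x, y) with x ∈ Λ^(n+2), y ∈ Λ, x_i = 0, ∏_{j=0}^{n+1} x_j = 1 + y, and such that there are no two indices p, q with |p − q| ≥ 2 and x_p = x_q = 0. Then on D_i one has y = −1 and val(y) = 0, every component F_k is real-valued on D_i, and F(D_i) = {(ψ_0(0), …, ψ_{i−1}(0), t, ψ_i(0), …, ψ_n(0), 0) : ψ_{i−1}(0) ≤ t ≤ ψ_i(0)}, the line segment of the broken line γ(0,·) joining the consecutive corner points A_{i−1}(0) and A_i(0). -/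
open Classical

/-- The extended valuation `val : Λ → [−∞, +∞]`, with `val 0 = +∞`. -/
noncomputable def valE (x : Nov) : EReal := if x = 0 then ⊤ else ((x.order : ℝ) : EReal)

/-- The `(k+1)`-th *order statistic* of a finite multiset of extended reals: the entry at
index `k` of the list sorted in nondecreasing order (junk value `0` if out of range). -/
noncomputable def orderStatE (s : Multiset EReal) (k : ℕ) : EReal :=
  (s.sort (· ≤ ·)).getD k 0

/-- The tropically continuous fibration `F` in homogeneous coordinates, with values in the
extended reals:
`F_k(x,y) = {Σ_j (j−k)·val(x_j) + k·min(0, val y), ψ 0 (val y), …, ψ n (val y)}_[k]`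
for `0 ≤ k ≤ n+1` (sums and products of extended reals taken with the Mathlib `EReal`
conventions, in particular `0 · (±∞) = 0`, `m · (+∞) = +∞` for `m > 0` and `= −∞` for
`m < 0`), and last component `val y`.  The real argument of `ψ j` is the order of `y`. -/
noncomputable def FmapE (n : ℕ) (ψ : Fin (n+1) → ℝ → ℝ)
    (x : Fin (n+2) → Nov) (y : Nov) : Fin (n+3) → EReal :=
  fun i => if (i : ℕ) = n + 2 then valE y
    else orderStatE
      (((∑ j : Fin (n+2), (((((j:ℕ):ℝ) - ((i:ℕ):ℝ)) : ℝ) : EReal) * valE (x j))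
          + ((((i:ℕ):ℝ) : ℝ) : EReal) * min 0 (valE y))
        ::ₘ Finset.univ.val.map (fun j => ((ψ j y.order : ℝ) : EReal))) (i : ℕ)

/- ### Auxiliary lemmas -/


private lemma oi_getD_zero {α : Type*} [LinearOrder α] (v : α) (l : List α) (d : α) :
    (l.orderedInsert (· ≤ ·) v).getD 0 d = min v (l.getD 0 v) := by
  cases l with
  | nil => simp [List.orderedInsert]
  | cons b t =>
    by_cases h : v ≤ b
    · rw [List.orderedInsert, if_pos h, List.getD_cons_zero, List.getD_cons_zero,
        min_eq_left h]
    · rw [List.orderedInsert, if_neg h, List.getD_cons_zero, List.getD_cons_zero,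
        min_eq_right (le_of_not_ge h)]

private lemma oi_getD_succ {α : Type*} [LinearOrder α] (v : α) :
    ∀ (l : List α), l.Pairwise (· ≤ ·) → ∀ (k : ℕ), k < l.length → ∀ (d : α),
      (l.orderedInsert (· ≤ ·) v).getD (k+1) d
        = max (l.getD k d) (min v (l.getD (k+1) v))
  | [], _, k, hk, d => by simp at hk
  | b :: t, hl, k, hk, d => by
    have hst := List.pairwise_cons.mp hl
    have hbmem : ∀ (j : ℕ) (w : α), b ≤ (b :: t).getD j w ∨ (b :: t).getD j w = w := by
      intro j w
      rcases lt_or_ge j (b :: t).length with hj | hj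
      · left
        rw [List.getD_eq_getElem _ _ hj]
        rcases List.mem_cons.mp (List.getElem_mem hj) with h | h
        · exact h.ge
        · exact hst.1 _ h
      · right
        exact List.getD_eq_default _ _ hj
    by_cases h : v ≤ b
    · rw [List.orderedInsert, if_pos h, List.getD_cons_succ]
      have h1 : v ≤ (b :: t).getD (k+1) v := by
        rcases hbmem (k+1) v with hh | hh
        · exact h.trans hh
        · rw [hh]
      have h2 : v ≤ (b :: t).getD k d := by
        rw [List.getD_eq_getElem _ _ hk]
        rcases List.mem_cons.mp (List.getElem_mem hk) with hh | hh
        · rw [hh]; exact h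
        · exact h.trans (hst.1 _ hh)
      rw [min_eq_left h1, max_eq_left h2]
    · rw [List.orderedInsert, if_neg h, List.getD_cons_succ]
      have hbv : b ≤ v := le_of_not_ge h
      cases k with
      | zero =>
        rw [oi_getD_zero, List.getD_cons_zero, List.getD_cons_succ]
        have hb : b ≤ min v (t.getD 0 v) := by
          refine le_min hbv ?_
          rcases hbmem 1 v with hh | hh
          · rw [List.getD_cons_succ] at hh; exact hh
          · rw [List.getD_cons_succ] at hh; rw [hh]; exact hbv
        rw [max_eq_right hb]
      | succ k' =>
        have hk' : k' < t.length := by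
          simpa [List.length_cons] using Nat.lt_of_succ_lt_succ hk
        rw [oi_getD_succ v t hst.2 k' hk' d, List.getD_cons_succ, List.getD_cons_succ]

private lemma sort_cons_eq_s11 (v : EReal) (l : List EReal) (hl : l.Pairwise (· ≤ ·)) :
    Multiset.sort (v ::ₘ (l : Multiset EReal)) (· ≤ ·) = l.orderedInsert (· ≤ ·) v := by
  refine List.Perm.eq_of_pairwise' (Multiset.pairwise_sort _ _) (hl.orderedInsert v l) ?_
  refine (Multiset.coe_eq_coe.mp ?_).trans (l.perm_orderedInsert (· ≤ ·) v).symm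
  rw [Multiset.sort_eq]
  rfl

private lemma valE_zero : valE 0 = ⊤ := if_pos rfl

private lemma valE_neg_one : valE (-1) = 0 := by
  unfold valE
  rw [if_neg (by simp : (-1 : Nov) = 0 → False), HahnSeries.order_neg, HahnSeries.order_one]
  simp

private lemma ereal_sum_ne_bot {β : Type*} {s : Finset β} {f : β → EReal}
    (h : ∀ j ∈ s, f j ≠ ⊥) : ∑ j ∈ s, f j ≠ ⊥ := by
  classical
  induction s using Finset.induction_on with
  | empty => simp
  | insert a s hx ih =>
    rw [Finset.sum_insert hx]
    rw [Ne, EReal.add_eq_bot_iff]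
    push_neg
    exact ⟨h _ (Finset.mem_insert_self _ _), ih fun j hj => h j (Finset.mem_insert_of_mem hj)⟩

private lemma ereal_sum_eq_top {β : Type*} {s : Finset β} {f : β → EReal}
    (h : ∀ j ∈ s, f j ≠ ⊥) {j0 : β} (hj0 : j0 ∈ s) (h2 : f j0 = ⊤) : ∑ j ∈ s, f j = ⊤ := by
  classical
  rw [← Finset.add_sum_erase _ _ hj0, h2]
  exact EReal.top_add_of_ne_bot (ereal_sum_ne_bot fun j hj => h j (Finset.mem_of_mem_erase hj))

private lemma ereal_sum_eq_bot {β : Type*} {s : Finset β} {f : β → EReal}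
    {j0 : β} (hj0 : j0 ∈ s) (h2 : f j0 = ⊥) : ∑ j ∈ s, f j = ⊥ := by
  classical
  rw [← Finset.add_sum_erase _ _ hj0, h2, EReal.bot_add]

private lemma vsum_top (n i : ℕ) (hi : i < n+2) (x : Fin (n+2) → Nov)
    (h0 : x ⟨i, hi⟩ = 0)
    (hnv : ∀ j : Fin (n+2), x j = 0 → i ≤ (j : ℕ) + 1) (k : ℕ) (hk : k < i) :
    (∑ j : Fin (n+2), ((((j:ℕ):ℝ) - ((k:ℕ):ℝ) : ℝ) : EReal) * valE (x j)) = ⊤ := by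
  refine ereal_sum_eq_top ?_ (Finset.mem_univ (⟨i, hi⟩ : Fin (n+2))) ?_
  · intro j _
    by_cases hz : x j = 0
    · have hc : (0:ℝ) ≤ ((j:ℕ):ℝ) - ((k:ℕ):ℝ) := by
        have h1 := hnv j hz
        have h2 : (k:ℕ) ≤ (j:ℕ) := by omega
        have h3 := (Nat.cast_le (α := ℝ)).mpr h2
        linarith
      rw [valE, if_pos hz]
      rcases eq_or_lt_of_le hc with hc0 | hcpos
      · rw [← hc0, EReal.coe_zero, zero_mul]; simp
      · rw [EReal.coe_mul_top_of_pos hcpos]; simp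
    · rw [valE, if_neg hz, ← EReal.coe_mul]
      exact EReal.coe_ne_bot _
  · have hcpos : (0:ℝ) < (((⟨i, hi⟩ : Fin (n+2)):ℕ):ℝ) - ((k:ℕ):ℝ) := by
      simp only [Fin.val_mk]
      have := (Nat.cast_lt (α := ℝ)).mpr hk
      linarith
    rw [h0, valE_zero, EReal.coe_mul_top_of_pos hcpos]

private lemma vsum_bot (n i : ℕ) (hi : i < n+2) (x : Fin (n+2) → Nov)
    (h0 : x ⟨i, hi⟩ = 0) (k : ℕ) (hk : i < k) :
    (∑ j : Fin (n+2), ((((j:ℕ):ℝ) - ((k:ℕ):ℝ) : ℝ) : EReal) * valE (x j)) = ⊥ := by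
  refine ereal_sum_eq_bot (Finset.mem_univ (⟨i, hi⟩ : Fin (n+2))) ?_
  have hcneg : (((⟨i, hi⟩ : Fin (n+2)):ℕ):ℝ) - ((k:ℕ):ℝ) < 0 := by
    simp only [Fin.val_mk]
    have := (Nat.cast_lt (α := ℝ)).mpr hk
    linarith
  rw [h0, valE_zero, EReal.coe_mul_top_of_neg hcneg]

private lemma FmapE_eval (n : ℕ) (ψ : Fin (n+1) → ℝ → ℝ)
    (hs : Monotone fun j : Fin (n+1) => ψ j 0) (x : Fin (n+2) → Nov)
    (m : Fin (n+3)) (hm : (m:ℕ) < n+2) :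
    FmapE n ψ x (-1) m =
      ((List.ofFn fun j : Fin (n+1) => ((ψ j 0 : ℝ) : EReal)).orderedInsert (· ≤ ·)
        (∑ j : Fin (n+2), ((((j:ℕ):ℝ) - ((m:ℕ):ℝ) : ℝ) : EReal) * valE (x j))).getD (m:ℕ) 0 := by
  have hord : (-1 : Nov).order = 0 := by
    rw [HahnSeries.order_neg, HahnSeries.order_one]
  have hLs : (List.ofFn fun j : Fin (n+1) => ((ψ j 0 : ℝ) : EReal)).Pairwise (· ≤ ·) := by
    rw [List.pairwise_ofFn]
    exact fun a b hab => EReal.coe_le_coe_iff.mpr (hs hab.le)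
  rw [FmapE, if_neg (Nat.ne_of_lt hm)]
  rw [valE_neg_one, min_self, mul_zero, add_zero, hord]
  rw [Fin.univ_val_map (fun j : Fin (n+1) => ((ψ j 0 : ℝ) : EReal))]
  rw [orderStatE, sort_cons_eq_s11 _ _ hLs]

private lemma oi_L_eval (n : ℕ) (ψ : Fin (n+1) → ℝ → ℝ)
    (hs : StrictMono fun j : Fin (n+1) => ψ j 0)
    (i : ℕ) (hi1 : 1 ≤ i) (hi2 : i ≤ n) (v : EReal) (k : ℕ) (hk : k < n+2)
    (hv1 : k < i → v = ⊤) (hv2 : i < k → v = ⊥) :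
    ((List.ofFn fun j : Fin (n+1) => ((ψ j 0 : ℝ) : EReal)).orderedInsert (· ≤ ·) v).getD k 0 =
      if hlt : k < i then ((ψ ⟨k, by omega⟩ 0 : ℝ) : EReal)
      else if k = i then
        max ((ψ ⟨i-1, by omega⟩ 0 : ℝ) : EReal)
          (min v ((ψ ⟨i, by omega⟩ 0 : ℝ) : EReal))
      else ((ψ ⟨k-1, by omega⟩ 0 : ℝ) : EReal) := by
  set L : List EReal := List.ofFn fun j : Fin (n+1) => ((ψ j 0 : ℝ) : EReal) with hL
  have hLs : L.Pairwise (· ≤ ·) := by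
    rw [hL, List.pairwise_ofFn]
    exact fun a b hab => EReal.coe_le_coe_iff.mpr (hs.monotone hab.le)
  have hLlen : L.length = n+1 := by rw [hL, List.length_ofFn]
  have hget : ∀ (d : EReal) (a : ℕ) (ha : a < n+1), L.getD a d = ((ψ ⟨a, ha⟩ 0 : ℝ) : EReal) := by
    intro d a ha
    rw [hL, List.getD_eq_getElem _ _ (by simp [List.length_ofFn]; omega), List.getElem_ofFn]
  have hmono : ∀ (a b : ℕ) (ha : a < n+1) (hb : b < n+1), a ≤ b →
      ((ψ ⟨a, ha⟩ 0 : ℝ) : EReal) ≤ ((ψ ⟨b, hb⟩ 0 : ℝ) : EReal) := by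
    intro a b ha hb hab
    exact EReal.coe_le_coe_iff.mpr (hs.monotone (show (⟨a, ha⟩ : Fin (n+1)) ≤ ⟨b, hb⟩ from hab))
  cases k with
  | zero =>
    have hv : v = ⊤ := hv1 (by omega)
    rw [oi_getD_zero, hv, min_eq_right le_top, hget _ 0 (by omega), dif_pos (by omega)]
  | succ a =>
    have ha : a < n+1 := by omega
    rw [oi_getD_succ v L hLs a (by omega) 0]
    rcases lt_trichotomy (a+1) i with hlt | heq | hgt
    · rw [hv1 hlt, min_eq_right le_top, hget 0 a ha, hget ⊤ (a+1) (by omega),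
        max_eq_right (hmono a (a+1) ha (by omega) (by omega)), dif_pos hlt]
    · rw [dif_neg (by omega), if_pos heq, hget 0 a ha, hget v (a+1) (by omega)]
      have e1 : (⟨a, ha⟩ : Fin (n+1)) = ⟨i-1, by omega⟩ := by
        apply Fin.ext; simp; omega
      have e2 : (⟨a+1, by omega⟩ : Fin (n+1)) = ⟨i, by omega⟩ := by
        apply Fin.ext; simp; omega
      rw [e1, e2]
    · rw [hv2 hgt, min_eq_left bot_le, max_eq_left bot_le, hget 0 a ha,
        dif_neg (by omega), if_neg (by omega)]
      have e1 : (⟨a, ha⟩ : Fin (n+1)) = ⟨a+1-1, by omega⟩ := by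
        apply Fin.ext; simp
      rw [e1]

private lemma target_eval (n : ℕ) (i : ℕ) (hi : i < n+2) (hi2 : i ≤ n+1) (t : ℝ)
    (g : Fin (n+1) → ℝ) (m : ℕ) (hm : m < n+2) :
    Fin.insertNth (α := fun _ => ℝ) (⟨i, hi⟩ : Fin (n+2)) t g ⟨m, hm⟩ =
      if _ : m < i then g ⟨m, by omega⟩
      else if m = i then t
      else g ⟨m-1, by omega⟩ := by
  rcases lt_trichotomy m i with h | h | h
  · rw [dif_pos h]
    have hlt : (⟨m, hm⟩ : Fin (n+2)) < ⟨i, hi⟩ := h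
    rw [Fin.insertNth_apply_below hlt]
    simp only [eq_rec_constant]
    congr 1
  · rw [dif_neg (by omega), if_pos h]
    subst h
    exact Fin.insertNth_apply_same _ _ _
  · rw [dif_neg (by omega), if_neg (by omega)]
    have hgt : (⟨i, hi⟩ : Fin (n+2)) < ⟨m, hm⟩ := h
    rw [Fin.insertNth_apply_above hgt]
    simp only [eq_rec_constant]
    congr 1

private lemma Fmap_eq_target (n : ℕ) (ψ : Fin (n+1) → ℝ → ℝ)
    (hs : StrictMono fun j : Fin (n+1) => ψ j 0)
    (i : ℕ) (hi1 : 1 ≤ i) (hi2 : i ≤ n) (x : Fin (n+2) → Nov) (t : ℝ)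
    (hvt : ∀ k : ℕ, k < i →
      (∑ j : Fin (n+2), ((((j:ℕ):ℝ) - ((k:ℕ):ℝ) : ℝ) : EReal) * valE (x j)) = ⊤)
    (hvb : ∀ k : ℕ, i < k →
      (∑ j : Fin (n+2), ((((j:ℕ):ℝ) - ((k:ℕ):ℝ) : ℝ) : EReal) * valE (x j)) = ⊥)
    (hvi : max ((ψ ⟨i-1, Nat.lt_succ_of_le ((Nat.sub_le i 1).trans hi2)⟩ 0 : ℝ) : EReal)
        (min (∑ j : Fin (n+2), ((((j:ℕ):ℝ) - ((i:ℕ):ℝ) : ℝ) : EReal) * valE (x j))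
          ((ψ ⟨i, Nat.lt_succ_of_le hi2⟩ 0 : ℝ) : EReal)) = (t : EReal)) :
    FmapE n ψ x (-1) = fun m : Fin (n+3) =>
      (((Fin.snoc (Fin.insertNth (⟨i, Nat.lt_succ_of_le (Nat.le_succ_of_le hi2)⟩ : Fin (n+2)) t fun j => ψ j 0) 0
        : Fin (n+3) → ℝ) m : ℝ) : EReal) := by
  funext m
  by_cases hm2 : (m:ℕ) = n + 2
  · have hml : m = Fin.last (n+2) := Fin.ext (by simpa using hm2)
    subst hml
    rw [FmapE, if_pos (by simp), valE_neg_one]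
    have : (Fin.snoc (Fin.insertNth (⟨i, by omega⟩ : Fin (n+2)) t fun j => ψ j 0) 0
        : Fin (n+3) → ℝ) (Fin.last (n+2)) = 0 := Fin.snoc_last _ _
    rw [this, EReal.coe_zero]
  · have hm : (m:ℕ) < n+2 := by have := m.isLt; omega
    rw [FmapE_eval n ψ hs.monotone x m hm,
        oi_L_eval n ψ hs i hi1 hi2 _ (m:ℕ) hm (fun h => hvt _ h) (fun h => hvb _ h)]
    have hcast : m = Fin.castSucc ⟨(m:ℕ), hm⟩ := Fin.ext (by simp)
    conv_rhs => rw [hcast]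
    rw [Fin.snoc_castSucc, target_eval n i (by omega) (by omega) t _ (m:ℕ) hm]
    split_ifs with h1 h2
    · rfl
    · rw [h2]
      exact hvi
    · rfl

/-- On the `i`-th compact toric divisor
`D_i = {(x,y) : x_i = 0, ∏_j x_j = 1 + y, no two vanishing coordinates at distance ≥ 2}`
one has `y = −1` and `val y = 0`, every component of `F` is real-valued, and the image
`F(D_i)` is the segment `{(ψ 0 0, …, ψ (i−1) 0, t, ψ i 0, …, ψ n 0, 0) :
ψ (i−1) 0 ≤ t ≤ ψ i 0}` of the broken line `γ(0, ·)` joining the consecutive corner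
points `A (i−1) 0` and `A i 0`. -/
theorem FmapE_image_divisor (n : ℕ) (ψ : Fin (n+1) → ℝ → ℝ)
    (hord : ∀ s : ℝ, StrictMono fun j => ψ j s)
    (i : ℕ) (hi1 : 1 ≤ i) (hi2 : i ≤ n)
    (D : Set ((Fin (n+2) → Nov) × Nov))
    (hD : D = {p | p.1 ⟨i, by omega⟩ = 0 ∧ (∏ j, p.1 j) = 1 + p.2 ∧
        ¬ ∃ q q' : Fin (n+2), p.1 q = 0 ∧ p.1 q' = 0 ∧
          ((q:ℕ) + 2 ≤ (q':ℕ) ∨ (q':ℕ) + 2 ≤ (q:ℕ))}) :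
    (∀ p ∈ D, p.2 = -1 ∧ valE p.2 = 0) ∧
    (∀ p ∈ D, ∀ k : Fin (n+3), ∃ t : ℝ, FmapE n ψ p.1 p.2 k = (t : EReal)) ∧
    (fun p : (Fin (n+2) → Nov) × Nov => FmapE n ψ p.1 p.2) '' D
      = {q : Fin (n+3) → EReal | ∃ t : ℝ,
          ψ ⟨i-1, by omega⟩ 0 ≤ t ∧ t ≤ ψ ⟨i, by omega⟩ 0 ∧
          q = fun m => (((Fin.snoc
              (Fin.insertNth ⟨i, by omega⟩ t fun j => ψ j 0) 0 : Fin (n+3) → ℝ) m : ℝ)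
            : EReal)} := by
  have hs : StrictMono fun j : Fin (n+1) => ψ j 0 := hord 0
  have hmem : ∀ p ∈ D, p.1 ⟨i, by omega⟩ = 0 ∧ p.2 = -1 ∧
      (∀ j : Fin (n+2), p.1 j = 0 → i ≤ (j:ℕ) + 1) := by
    intro p hp
    rw [hD] at hp
    obtain ⟨h0, hprod, hnv⟩ := hp
    have hy : p.2 = -1 := by
      have hz : (1 : Nov) + p.2 = 0 := by
        rw [← hprod]
        exact Finset.prod_eq_zero (Finset.mem_univ _) h0
      exact eq_neg_of_add_eq_zero_right hz
    refine ⟨h0, hy, ?_⟩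
    intro j hj
    by_contra hcon
    apply hnv
    refine ⟨j, ⟨i, by omega⟩, hj, h0, ?_⟩
    simp only [Fin.val_mk]
    omega
  have himg : (fun p : (Fin (n+2) → Nov) × Nov => FmapE n ψ p.1 p.2) '' D
      = {q : Fin (n+3) → EReal | ∃ t : ℝ,
          ψ ⟨i-1, by omega⟩ 0 ≤ t ∧ t ≤ ψ ⟨i, by omega⟩ 0 ∧
          q = fun m => (((Fin.snoc
              (Fin.insertNth ⟨i, by omega⟩ t fun j => ψ j 0) 0 : Fin (n+3) → ℝ) m : ℝ)
            : EReal)} := by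
    apply Set.Subset.antisymm
    · rintro _ ⟨p, hp, rfl⟩
      obtain ⟨h0, hy, hnv3⟩ := hmem p hp
      simp only [Set.mem_setOf_eq]
      rw [hy]
      set v : EReal :=
        ∑ j : Fin (n+2), ((((j:ℕ):ℝ) - ((i:ℕ):ℝ) : ℝ) : EReal) * valE (p.1 j) with hv
      set M : EReal := max ((ψ ⟨i-1, by omega⟩ 0 : ℝ) : EReal)
        (min v ((ψ ⟨i, by omega⟩ 0 : ℝ) : EReal)) with hM
      have hMl : ((ψ ⟨i-1, by omega⟩ 0 : ℝ) : EReal) ≤ M := le_max_left _ _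
      have hMu : M ≤ ((ψ ⟨i, by omega⟩ 0 : ℝ) : EReal) := by
        refine max_le ?_ (min_le_right _ _)
        refine EReal.coe_le_coe_iff.mpr (hs.monotone ?_)
        show (⟨i-1, by omega⟩ : Fin (n+1)) ≤ ⟨i, by omega⟩
        simp only [Fin.mk_le_mk]
        omega
      have hMtop : M ≠ ⊤ := ne_top_of_le_ne_top (EReal.coe_ne_top _) hMu
      have hMbot : M ≠ ⊥ := by
        intro h
        rw [h, le_bot_iff] at hMl
        exact EReal.coe_ne_bot _ hMl
      have ht : ((M.toReal : ℝ) : EReal) = M := EReal.coe_toReal hMtop hMbot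
      refine ⟨M.toReal, ?_, ?_, ?_⟩
      · exact EReal.coe_le_coe_iff.mp (le_of_le_of_eq hMl ht.symm)
      · exact EReal.coe_le_coe_iff.mp (le_of_eq_of_le ht hMu)
      · exact Fmap_eq_target n ψ hs i hi1 hi2 p.1 M.toReal
          (fun k hk => vsum_top n i (by omega) p.1 h0 hnv3 k hk)
          (fun k hk => vsum_bot n i (by omega) p.1 h0 k hk)
          (by rw [← hv, ← hM]; exact ht.symm)
    · rintro q ⟨t, ht1, ht2, rfl⟩
      set x : Fin (n+2) → Nov := fun j =>
        if j = (⟨i, by omega⟩ : Fin (n+2)) then 0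
        else if j = (⟨i+1, by omega⟩ : Fin (n+2)) then HahnSeries.single t 1 else 1 with hxdef
      have hx0 : x ⟨i, by omega⟩ = 0 := by rw [hxdef]; simp
      have hxz : ∀ j : Fin (n+2), x j = 0 → j = (⟨i, by omega⟩ : Fin (n+2)) := by
        intro j hj
        by_contra hne
        rw [hxdef] at hj
        beta_reduce at hj
        rw [if_neg hne] at hj
        by_cases h2 : j = (⟨i+1, by omega⟩ : Fin (n+2))
        · rw [if_pos h2] at hj
          exact HahnSeries.single_ne_zero one_ne_zero hj
        · rw [if_neg h2] at hj
          exact one_ne_zero hj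
      refine ⟨(x, -1), ?_, ?_⟩
      · rw [hD]
        refine ⟨hx0, ?_, ?_⟩
        · show (∏ j, x j) = 1 + (-1)
          rw [Finset.prod_eq_zero (Finset.mem_univ _) hx0, add_neg_cancel]
        · rintro ⟨q1, q2, hq1, hq2, hd⟩
          rw [hxz _ hq1, hxz _ hq2] at hd
          simp only [Fin.val_mk] at hd
          omega
      · show FmapE n ψ x (-1) = _
        apply Fmap_eq_target n ψ hs i hi1 hi2 x t
        · intro k hk
          refine vsum_top n i (by omega) x hx0 (fun j hj => ?_) k hk
          rw [hxz j hj]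
          simp only [Fin.val_mk]
          omega
        · intro k hk
          exact vsum_bot n i (by omega) x hx0 k hk
        · have hsum : (∑ j : Fin (n+2), ((((j:ℕ):ℝ) - ((i:ℕ):ℝ) : ℝ) : EReal) * valE (x j))
              = ((t : ℝ) : EReal) := by
            rw [Finset.sum_eq_single (⟨i+1, by omega⟩ : Fin (n+2)) ?_ ?_]
            · have hxv : x ⟨i+1, by omega⟩ = HahnSeries.single t 1 := by
                rw [hxdef]
                beta_reduce
                rw [if_neg (by simp [Fin.ext_iff]), if_pos rfl]
              rw [hxv, valE, if_neg (HahnSeries.single_ne_zero one_ne_zero),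
                HahnSeries.order_single one_ne_zero, ← EReal.coe_mul]
              congr 1
              simp only [Fin.val_mk]
              push_cast
              ring
            · intro b _ hb
              by_cases hbi : b = (⟨i, by omega⟩ : Fin (n+2))
              · have hc : (((b:ℕ):ℝ) - ((i:ℕ):ℝ) : ℝ) = 0 := by
                  rw [hbi]; simp
                rw [hc, EReal.coe_zero, zero_mul]
              · have hxb : x b = 1 := by
                  rw [hxdef]
                  beta_reduce
                  rw [if_neg hbi, if_neg hb]
                rw [hxb, valE, if_neg one_ne_zero, HahnSeries.order_one,
                  ← EReal.coe_mul, mul_zero, EReal.coe_zero]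
            · intro h
              exact absurd (Finset.mem_univ _) h
          rw [hsum, min_eq_left (EReal.coe_le_coe_iff.mpr ht2),
            max_eq_right (EReal.coe_le_coe_iff.mpr ht1)]
  refine ⟨?_, ?_, himg⟩
  · intro p hp
    obtain ⟨-, hy, -⟩ := hmem p hp
    exact ⟨hy, by rw [hy, valE_neg_one]⟩
  · intro p hp k
    have hx : (fun p : (Fin (n+2) → Nov) × Nov => FmapE n ψ p.1 p.2) p
        ∈ (fun p : (Fin (n+2) → Nov) × Nov => FmapE n ψ p.1 p.2) '' D :=
      Set.mem_image_of_mem _ hp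
    rw [himg] at hx
    obtain ⟨t, -, -, hq⟩ := hx
    refine ⟨(Fin.snoc (Fin.insertNth ⟨i, by omega⟩ t fun j => ψ j 0) 0 : Fin (n+3) → ℝ) k, ?_⟩
    exact congrFun hq k
end

section
/- Assume in addition that ψ_j(s) > 0 for every s ∈ ℝ and every 0 ≤ j ≤ n. Then for every pair (x, y) with x ∈ (Λ^×)^(n+2), y ∈ Λ^× and ∏_{j=0}^{n+1} x_j = 1 + y, one has F(x,y) ∈ {γ(s,c) : s ∈ ℝ, c > 0} if and only if Σ_{j=0}^{n+1} j·val(x_j) > 0, i.e. if and only if the non-archimedean norm of ∏_{j=0}^{n+1} x_j^j is strictly less than 1. -/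
/-! ### Auxiliary combinatorial lemmas about order statistics -/

lemma St13.sort_cons (t : ℝ) (M : Multiset ℝ) :
    (t ::ₘ M).sort (· ≤ ·) = (M.sort (· ≤ ·)).orderedInsert (· ≤ ·) t := by
  refine (fun hp h1 h2 => List.Perm.eq_of_pairwise' (r := (· ≤ ·)) h1 h2 hp) ?_ ?_ ?_
  · have h1 : ((t ::ₘ M).sort (· ≤ ·) : Multiset ℝ) = ((t :: M.sort (· ≤ ·) : List ℝ) : Multiset ℝ) := by
      rw [Multiset.sort_eq, ← Multiset.cons_coe, Multiset.sort_eq]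
    exact (Multiset.coe_eq_coe.mp h1).trans (List.perm_orderedInsert _ _ _).symm
  · exact Multiset.pairwise_sort _ _
  · exact (Multiset.pairwise_sort (s := M) _).orderedInsert _ _

lemma St13.sort_coe (L : List ℝ) (hLs : L.Pairwise (· ≤ ·)) :
    (L : Multiset ℝ).sort (· ≤ ·) = L :=
  List.Perm.eq_of_pairwise'
    (Multiset.pairwise_sort _ _) hLs (Multiset.coe_eq_coe.mp (Multiset.sort_eq _ _))

lemma St13.getD_sort_cons (L : List ℝ) (hLs : L.Pairwise (· ≤ ·)) (t : ℝ) (k : ℕ) :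
    ((t ::ₘ (L : Multiset ℝ)).sort (· ≤ ·)).getD k 0 =
      (if k < (L.takeWhile (fun b => ¬ t ≤ b)).length then L.getD k 0
       else if k = (L.takeWhile (fun b => ¬ t ≤ b)).length then t else L.getD (k-1) 0) := by
  rw [St13.sort_cons, St13.sort_coe L hLs, List.orderedInsert_eq_take_drop]
  set l1 := L.takeWhile (fun b => ¬ t ≤ b) with hl1
  set l2 := L.dropWhile (fun b => ¬ t ≤ b) with hl2
  have hL : l1 ++ l2 = L := List.takeWhile_append_dropWhile ..
  set k1 := l1.length with hk1
  rcases lt_trichotomy k k1 with h | h | h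
  · rw [if_pos h]
    rw [List.getD_eq_getElem?_getD, List.getD_eq_getElem?_getD,
      List.getElem?_append_left h, ← hL, List.getElem?_append_left h]
  · rw [if_neg (by omega), if_pos h, List.getD_eq_getElem?_getD, h,
      List.getElem?_append_right (le_refl _), Nat.sub_self, List.getElem?_cons_zero]
    rfl
  · rw [if_neg (by omega), if_neg (by omega), List.getD_eq_getElem?_getD,
      List.getD_eq_getElem?_getD, List.getElem?_append_right (by omega), ← hL,
      List.getElem?_append_right (by omega)]
    have : k - k1 = (k - 1 - k1) + 1 := by omega
    rw [this, List.getElem?_cons_succ]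

/-- Extension of `g : Fin (n+1) → ℝ` to `ℕ` by clamping the index. -/
noncomputable def St13.gN (n : ℕ) (g : Fin (n+1) → ℝ) (j : ℕ) : ℝ := g ⟨min j n, by omega⟩

lemma St13.gN_mono {n : ℕ} {g : Fin (n+1) → ℝ} (hg : StrictMono g) :
    Monotone (St13.gN n g) := fun i j hij => by
  unfold St13.gN
  exact hg.monotone (by simp [Fin.le_def]; omega)

lemma St13.gN_strict {n : ℕ} {g : Fin (n+1) → ℝ} (hg : StrictMono g) {i j : ℕ}
    (hij : i < j) (hj : j ≤ n) : St13.gN n g i < St13.gN n g j := by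
  unfold St13.gN
  exact hg (by simp [Fin.lt_def]; omega)

/-- The "clamp" normal form of the `k`-th order statistic of `{t, g 0, …, g n}`. -/
noncomputable def St13.statFn (n : ℕ) (g : Fin (n+1) → ℝ) (t : ℝ) (k : ℕ) : ℝ :=
  if k = 0 then min t (St13.gN n g 0)
  else if k = n+1 then max t (St13.gN n g n)
  else max (St13.gN n g (k-1)) (min t (St13.gN n g k))

lemma St13.orderStat_eq_statFn {n : ℕ} (g : Fin (n+1) → ℝ) (hg : StrictMono g) (t : ℝ)
    (k : ℕ) (hk : k ≤ n+1) :
    orderStat (t ::ₘ Finset.univ.val.map g) k = St13.statFn n g t k := by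
  have hL : (Finset.univ.val.map g : Multiset ℝ) = ((List.ofFn g : List ℝ) : Multiset ℝ) := by
    simp
  set L := List.ofFn g with hLdef
  have hLs : L.Pairwise (· ≤ ·) := (List.sortedLE_ofFn_iff.mpr hg.monotone).pairwise
  have hlen : L.length = n+1 := by simp [hLdef]
  have hgetD : ∀ i, i < n+1 → L.getD i 0 = St13.gN n g i := by
    intro i hi
    rw [List.getD_eq_getElem?_getD, List.getElem?_eq_getElem (by omega)]
    simp only [Option.getD_some, hLdef, List.getElem_ofFn]
    unfold St13.gN
    congr 1
    simp only [Fin.ext_iff]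
    omega
  rw [orderStat, hL, St13.getD_sort_cons L hLs t k]
  set k1 := (L.takeWhile (fun b => ¬ t ≤ b)).length with hk1def
  have hsplit : k1 + (L.dropWhile (fun b => ¬ t ≤ b)).length = n + 1 := by
    have h := congrArg List.length
      (List.takeWhile_append_dropWhile (p := fun b => decide ¬ t ≤ b) (l := L))
    rw [List.length_append, hlen] at h
    exact h
  have hk1len : k1 ≤ n+1 := by omega
  -- elements of the takeWhile prefix are < t
  have hlt : ∀ i, i < k1 → St13.gN n g i < t := by
    intro i hi
    have hiL : i < L.length := by omega
    have hpre := List.takeWhile_prefix (l := L) (p := fun b => ¬ t ≤ b)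
    have hmem : (L.takeWhile (fun b => ¬ t ≤ b))[i] ∈ L.takeWhile (fun b => ¬ t ≤ b) :=
      List.getElem_mem (by omega)
    have hp := List.mem_takeWhile_imp hmem
    have heq : (L.takeWhile (fun b => ¬ t ≤ b))[i]'(by omega) = L[i] :=
      hpre.getElem (by omega)
    rw [heq] at hp
    have : ¬ t ≤ L[i] := by simpa using hp
    have := lt_of_not_ge this
    rwa [← hgetD i (by omega), List.getD_eq_getElem?_getD, List.getElem?_eq_getElem hiL]
  -- elements from index k1 on are ≥ t
  have hge : ∀ i, k1 ≤ i → i < n+1 → t ≤ St13.gN n g i := by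
    intro i hik hi
    have hiL : i < L.length := by omega
    have hdlen : 0 < (L.dropWhile (fun b => ¬ t ≤ b)).length := by omega
    have hhead := List.dropWhile_get_zero_not (l := L) (p := fun b => ¬ t ≤ b) hdlen
    have h0 : L[k1]? = some ((L.dropWhile (fun b => ¬ t ≤ b)).get ⟨0, hdlen⟩) := by
      conv_lhs => rw [← List.takeWhile_append_dropWhile (p := fun b => ¬ t ≤ b) (l := L)]
      rw [List.getElem?_append_right (le_refl _), Nat.sub_self,
        List.getElem?_eq_getElem hdlen]
      simp
    have h0' : L[k1]? = some (L[k1]'(by omega)) := List.getElem?_eq_getElem (by omega)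
    have hheadeq : (L.dropWhile (fun b => ¬ t ≤ b)).get ⟨0, hdlen⟩ = L[k1]'(by omega) :=
      Option.some.inj (h0 ▸ h0')
    rw [hheadeq] at hhead
    have h1 : t ≤ L[k1]'(by omega) := by simpa using hhead
    have h2 : L[k1]'(by omega) ≤ L[i] := by
      rcases eq_or_lt_of_le hik with rfl | hik'
      · exact le_refl _
      · exact List.pairwise_iff_getElem.mp hLs _ _ _ _ hik'
    have h3 : L[i] = St13.gN n g i := by
      rw [← hgetD i hi, List.getD_eq_getElem?_getD, List.getElem?_eq_getElem hiL]
      rfl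
    rw [← h3]
    exact h1.trans h2
  unfold St13.statFn
  rcases lt_trichotomy k k1 with h | h | h
  · rw [if_pos h, hgetD k (by omega)]
    have hklt : St13.gN n g k < t := hlt k h
    rcases Nat.eq_zero_or_pos k with rfl | hk0
    · rw [if_pos rfl, min_eq_right hklt.le]
    · rw [if_neg (by omega), if_neg (by omega), min_eq_right hklt.le,
        max_eq_right (St13.gN_mono hg (by omega))]
  · rw [if_neg (by omega), if_pos h]
    rcases Nat.eq_zero_or_pos k with rfl | hk0
    · rw [if_pos rfl, min_eq_left (hge 0 (by omega) (by omega))]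
    · rcases eq_or_lt_of_le hk with hkn | hkn
      · rw [if_neg (by omega), if_pos hkn, max_eq_left (hlt n (by omega)).le]
      · rw [if_neg (by omega), if_neg (by omega),
          min_eq_left (hge k (by omega) (by omega)),
          max_eq_right (hlt (k-1) (by omega)).le]
  · rw [if_neg (by omega), if_neg (by omega), hgetD (k-1) (by omega)]
    have ht1 : t ≤ St13.gN n g (k-1) := hge (k-1) (by omega) (by omega)
    rcases eq_or_lt_of_le hk with hkn | hkn
    · have hk1n : k - 1 = n := by omega
      rw [if_neg (by omega), if_pos hkn, hk1n, max_eq_right (hk1n ▸ ht1)]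
    · rw [if_neg (by omega), if_neg (by omega),
        min_eq_left (ht1.trans (St13.gN_mono hg (by omega))),
        max_eq_left ht1]

lemma St13.statFn_eq_of_ge {n : ℕ} {g : Fin (n+1) → ℝ} (hg : StrictMono g) {u : ℝ} {k : ℕ}
    (hk : k ≤ n) (h : St13.gN n g k ≤ u) : St13.statFn n g u k = St13.gN n g k := by
  unfold St13.statFn
  rcases Nat.eq_zero_or_pos k with rfl | hk0
  · rw [if_pos rfl, min_eq_right h]
  · rw [if_neg (by omega), if_neg (by omega), min_eq_right h,
      max_eq_right (St13.gN_mono hg (by omega))]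

lemma St13.statFn_eq_of_le {n : ℕ} {g : Fin (n+1) → ℝ} (hg : StrictMono g) {u : ℝ} {k : ℕ}
    (hk1 : 1 ≤ k) (hk : k ≤ n+1) (h : u ≤ St13.gN n g (k-1)) :
    St13.statFn n g u k = St13.gN n g (k-1) := by
  unfold St13.statFn
  rcases eq_or_lt_of_le hk with hkn | hkn
  · have hk1n : k - 1 = n := by omega
    have h' : u ≤ St13.gN n g n := by rwa [hk1n] at h
    rw [if_neg (by omega), if_pos hkn, hk1n, max_eq_right h']
  · rw [if_neg (by omega), if_neg (by omega),
      min_eq_left (h.trans (St13.gN_mono hg (by omega))), max_eq_left h]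

/-- Construction of the common value `c` when `t 0 > 0`. -/
lemma St13.exists_c {n : ℕ} (g : Fin (n+1) → ℝ) (hg : StrictMono g)
    (hgpos : ∀ j, 0 < g j) (t : ℕ → ℝ) (hanti : ∀ k k' : ℕ, k ≤ k' → t k' ≤ t k)
    (hA : 0 < t 0) :
    ∃ c : ℝ, 0 < c ∧ ∀ k, k ≤ n+1 → St13.statFn n g (t k) k = St13.statFn n g c k := by
  classical
  have hgNpos : ∀ j, 0 < St13.gN n g j := fun j => hgpos _
  set Q : ℕ → Prop := fun k => k = 0 ∨ St13.gN n g (k-1) < t k with hQ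
  set k0 := Nat.findGreatest Q (n+1) with hk0
  have hQk0 : Q k0 := Nat.findGreatest_spec (m := 0) (by omega) (Or.inl rfl)
  have hk0le : k0 ≤ n+1 := Nat.findGreatest_le _
  have hgt : ∀ k, k0 < k → k ≤ n+1 → t k ≤ St13.gN n g (k-1) := by
    intro k hk hk'
    have hnQ := Nat.findGreatest_is_greatest hk hk'
    simp only [hQ] at hnQ
    push_neg at hnQ
    exact hnQ.2
  set c : ℝ := if k0 = n+1 then t (n+1) else min (t k0) (St13.gN n g k0) with hc
  have hQk0' : 1 ≤ k0 → St13.gN n g (k0-1) < t k0 := by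
    intro h1
    rcases hQk0 with h | h
    · omega
    · exact h
  have hck0 : c ≤ t k0 := by
    rw [hc]; split_ifs with h
    · rw [h]
    · exact min_le_left _ _
  have hcg : k0 ≠ n+1 → c ≤ St13.gN n g k0 := by
    intro h; rw [hc, if_neg h]; exact min_le_right _ _
  have hctlow : 1 ≤ k0 → St13.gN n g (k0-1) < c := by
    intro h1
    rw [hc]; split_ifs with h
    · exact h ▸ hQk0' h1
    · exact lt_min (hQk0' h1) (St13.gN_strict hg (by omega) (by omega))
  have hcpos : 0 < c := by
    rcases Nat.eq_zero_or_pos k0 with h0 | h1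
    · rw [hc, if_neg (by omega), h0]
      exact lt_min (h0 ▸ hA) (hgNpos 0)
    · exact (hgNpos (k0-1)).trans (hctlow h1)
  refine ⟨c, hcpos, fun k hk => ?_⟩
  rcases lt_trichotomy k k0 with h | h | h
  · -- both sides equal gN k
    have hgk : St13.gN n g k < t k0 := by
      calc St13.gN n g k ≤ St13.gN n g (k0-1) := St13.gN_mono hg (by omega)
        _ < t k0 := hQk0' (by omega)
    have h1 : St13.gN n g k ≤ t k := hgk.le.trans (hanti _ _ (by omega))
    have h2 : St13.gN n g k ≤ c := by
      rw [hc]; split_ifs with hcase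
      · exact hcase ▸ hgk.le
      · exact le_min hgk.le (St13.gN_mono hg (by omega))
    rw [St13.statFn_eq_of_ge hg (by omega) h1, St13.statFn_eq_of_ge hg (by omega) h2]
  · -- both sides equal c
    rw [h]
    unfold St13.statFn
    rcases Nat.eq_zero_or_pos k0 with h0 | h1
    · have hcdef : c = min (t 0) (St13.gN n g 0) := by
        rw [hc, if_neg (by omega), h0]
      have hcle : c ≤ St13.gN n g 0 := by rw [hcdef]; exact min_le_right _ _
      rw [if_pos h0, if_pos h0, h0, ← hcdef, min_eq_left hcle]
    · rcases eq_or_lt_of_le hk0le with hkn | hkn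
      · have hcdef : c = t k0 := by rw [hc, if_pos hkn, hkn]
        rw [if_neg (by omega), if_pos hkn, if_neg (by omega), if_pos hkn, ← hcdef]
      · have hcdef : c = min (t k0) (St13.gN n g k0) := by rw [hc, if_neg (by omega)]
        rw [if_neg (by omega), if_neg (by omega), if_neg (by omega), if_neg (by omega),
          ← hcdef, min_eq_left (hcg (by omega))]
  · -- both sides equal gN (k-1)
    have hkey : t (k0+1) ≤ St13.gN n g k0 := by
      have := hgt (k0+1) (by omega) (by omega)
      rwa [Nat.add_sub_cancel] at this
    have h1 : t k ≤ St13.gN n g (k-1) :=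
      ((hanti _ _ (by omega)).trans hkey).trans (St13.gN_mono hg (by omega))
    have h2 : c ≤ St13.gN n g (k-1) :=
      (hcg (by omega)).trans (St13.gN_mono hg (by omega))
    rw [St13.statFn_eq_of_le hg (by omega) hk h1, St13.statFn_eq_of_le hg (by omega) hk h2]

/-! ### Valuation lemmas -/

lemma St13.val_prod {ι : Type*} (s : Finset ι) (f : ι → Nov) (hf : ∀ j ∈ s, f j ≠ 0) :
    val (∏ j ∈ s, f j) = ∑ j ∈ s, val (f j) := by
  classical
  induction s using Finset.induction_on with
  | empty => simp [val, HahnSeries.order_one]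
  | insert a s' ha ih =>
    rw [Finset.prod_insert ha, Finset.sum_insert ha, val,
      HahnSeries.order_mul (hf _ (Finset.mem_insert_self _ _))
        (Finset.prod_ne_zero_iff.mpr fun j hj => hf j (Finset.mem_insert_of_mem hj)),
      ← ih (fun j hj => hf j (Finset.mem_insert_of_mem hj))]
    rfl

/-- If moreover `ψ j s > 0` for all `j` and `s`, then for every `(x,y)`
with all `x j` and `y` nonzero and `∏_j x_j = 1 + y`, the point `F(x,y)` lies in
`{γ(s,c) : s ∈ ℝ, c > 0}` if and only if `Σ_j j·val(x_j) > 0`, i.e. if and only if the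
non-archimedean norm of `∏_j x_j^j` is strictly less than `1` (equivalently, its
valuation is positive). -/
theorem Fmap_mem_iff_norm_lt_one (n : ℕ) (ψ : Fin (n+1) → ℝ → ℝ)
    (hord : ∀ s : ℝ, StrictMono fun j => ψ j s)
    (hpos : ∀ (s : ℝ) (j : Fin (n+1)), 0 < ψ j s)
    (x : Fin (n+2) → Nov) (y : Nov)
    (hx : ∀ j, x j ≠ 0) (hy : y ≠ 0) (hprod : (∏ j, x j) = 1 + y) :
    (Fmap n ψ x y ∈ {p : Fin (n+3) → ℝ | ∃ s c : ℝ, 0 < c ∧ p = gammaMap n ψ (s, c)}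
      ↔ 0 < ∑ j : Fin (n+2), ((j:ℕ):ℝ) * val (x j)) ∧
    (Fmap n ψ x y ∈ {p : Fin (n+3) → ℝ | ∃ s c : ℝ, 0 < c ∧ p = gammaMap n ψ (s, c)}
      ↔ 0 < val (∏ j : Fin (n+2), (x j) ^ (j:ℕ))) := by
  classical
  set s := val y with hs
  set g : Fin (n+1) → ℝ := fun j => ψ j s with hgdef
  have hgs : StrictMono g := hord s
  have hgpos : ∀ j, 0 < g j := hpos s
  set A := ∑ j : Fin (n+2), ((j:ℕ):ℝ) * val (x j) with hA
  set S := ∑ j : Fin (n+2), val (x j) with hS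
  have hprodne : (1 : Nov) + y ≠ 0 := by
    rw [← hprod]
    exact Finset.prod_ne_zero_iff.mpr (fun j _ => hx j)
  have hSval : S = val (1 + y) := by
    rw [← hprod, St13.val_prod _ _ (fun j _ => hx j)]
  have hmS : min 0 s ≤ S := by
    have h := HahnSeries.min_order_le_order_add (x := (1 : Nov)) (y := y) hprodne
    rw [HahnSeries.order_one] at h
    rw [hSval]
    exact h
  set m := min 0 s with hm
  set t : ℕ → ℝ := fun k => A - k * (S - m) with ht
  have hanti : ∀ k k' : ℕ, k ≤ k' → t k' ≤ t k := by
    intro k k' hkk'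
    rw [ht]
    simp only
    have h1 : (k:ℝ) ≤ (k':ℝ) := Nat.cast_le.mpr hkk'
    nlinarith [sub_nonneg.mpr hmS]
  have hFent : ∀ k : ℕ,
      (∑ j : Fin (n+2), (((j:ℕ):ℝ) - (k:ℝ)) * val (x j)) + (k:ℝ) * m = t k := by
    intro k
    rw [ht]
    simp only [sub_mul, Finset.sum_sub_distrib, ← Finset.mul_sum, ← hA, ← hS]
    ring
  have hFm : ∀ (i : Fin (n+3)), (i:ℕ) ≠ n+2 →
      Fmap n ψ x y i = St13.statFn n g (t (i:ℕ)) (i:ℕ) := by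
    intro i hi
    show (if (i:ℕ) = n + 2 then val y else _) = _
    rw [if_neg hi, hFent (i:ℕ)]
    exact St13.orderStat_eq_statFn g hgs _ (i:ℕ) (by omega)
  have hGm : ∀ (c : ℝ) (i : Fin (n+3)), (i:ℕ) ≠ n+2 →
      gammaMap n ψ (s, c) i = St13.statFn n g c (i:ℕ) := by
    intro c i hi
    show (if (i:ℕ) = n + 2 then s else _) = _
    rw [if_neg hi]
    exact St13.orderStat_eq_statFn g hgs _ (i:ℕ) (by omega)
  have hmain : Fmap n ψ x y ∈ {p : Fin (n+3) → ℝ |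
      ∃ s c : ℝ, 0 < c ∧ p = gammaMap n ψ (s, c)} ↔ 0 < A := by
    constructor
    · rintro ⟨s', c, hc, heq⟩
      have hlast := congrFun heq ⟨n+2, by omega⟩
      have hs' : s' = s := by
        have h1 : Fmap n ψ x y ⟨n+2, by omega⟩ = s := if_pos rfl
        have h2 : gammaMap n ψ (s', c) ⟨n+2, by omega⟩ = s' := if_pos rfl
        rw [h1, h2] at hlast
        exact hlast.symm
      subst hs'
      have h0 := congrFun heq ⟨0, by omega⟩
      rw [hFm ⟨0, by omega⟩ (by simp), hGm c ⟨0, by omega⟩ (by simp)] at h0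
      have h0' : min (t 0) (St13.gN n g 0) = min c (St13.gN n g 0) := by
        have e1 : St13.statFn n g (t 0) 0 = min (t 0) (St13.gN n g 0) := if_pos rfl
        have e2 : St13.statFn n g c 0 = min c (St13.gN n g 0) := if_pos rfl
        rw [← e1, ← e2]
        exact h0
      have ht0 : t 0 = A := by rw [ht]; simp
      have hpos0 : 0 < min c (St13.gN n g 0) := lt_min hc (hgpos _)
      rw [← h0', ht0] at hpos0
      exact lt_of_lt_of_le hpos0 (min_le_left _ _)
    · intro hApos
      obtain ⟨c, hc, hcall⟩ := St13.exists_c g hgs hgpos t hanti (by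
        rw [ht]; simpa using hApos)
      refine ⟨s, c, hc, funext fun i => ?_⟩
      by_cases hi : (i:ℕ) = n+2
      · show (if (i:ℕ) = n + 2 then val y else _) = (if (i:ℕ) = n + 2 then s else _)
        rw [if_pos hi, if_pos hi]
      · rw [hFm i hi, hGm c i hi]
        exact hcall (i:ℕ) (by omega)
  refine ⟨hmain, hmain.trans ?_⟩
  have hvp : val (∏ j : Fin (n+2), (x j) ^ (j:ℕ)) = A := by
    rw [St13.val_prod _ _ (fun j _ => pow_ne_zero _ (hx j)), hA]
    congr 1
    funext j
    rw [val, HahnSeries.order_pow]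
    simp [val, nsmul_eq_mul]
  rw [hvp]
end

section
/- Let ψ : ℝ → ℝ and take all the functions in the definition of F to be equal: ψ_0 = ψ_1 = ⋯ = ψ_n = ψ. Then for every pair (x, y) with x ∈ (Λ^×)^(n+2), y ∈ Λ^× and ∏_{j=0}^{n+1} x_j = 1 + y: F_0(x,y) = min( Σ_{j=0}^{n+1} j·val(x_j), ψ(val(y)) ); F_k(x,y) = ψ(val(y)) for every 1 ≤ k ≤ n; and F_{n+1}(x,y) = max( Σ_{j=0}^{n+1} (j−n−1)·val(x_j) + (n+1)·min(0, val(y)), ψ(val(y)) ). -/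
lemma sort_cons_replicate (a c : ℝ) (m : ℕ) :
    (a ::ₘ Multiset.replicate m c).sort (· ≤ ·) =
      if a ≤ c then a :: List.replicate m c else List.replicate m c ++ [a] := by
  have hanti : IsAntisymm ℝ (fun x1 x2 : ℝ => x1 ≤ x2) := ⟨fun _ _ h h' => le_antisymm h h'⟩
  split_ifs with h
  · refine (fun hp h1 h2 => List.Perm.eq_of_pairwise' (r := fun x1 x2 : ℝ => x1 ≤ x2)
      (l₂ := a :: List.replicate m c) h1 h2 hp) ?_ ?_ ?_
    · apply Multiset.coe_eq_coe.mp
      rw [Multiset.sort_eq, ← Multiset.cons_coe, Multiset.coe_replicate]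
    · exact Multiset.pairwise_sort _ _
    · rw [List.pairwise_cons]
      refine ⟨fun b hb => ?_, ?_⟩
      · rw [List.eq_of_mem_replicate hb]; exact h
      · simp [List.pairwise_replicate]
  · refine (fun hp h1 h2 => List.Perm.eq_of_pairwise' (r := fun x1 x2 : ℝ => x1 ≤ x2)
      (l₂ := List.replicate m c ++ [a]) h1 h2 hp) ?_ ?_ ?_
    · apply Multiset.coe_eq_coe.mp
      rw [Multiset.sort_eq, ← Multiset.coe_add, Multiset.coe_replicate, add_comm,
        Multiset.coe_singleton, Multiset.singleton_add]
    · exact Multiset.pairwise_sort _ _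
    · rw [List.pairwise_append]
      refine ⟨?_, by simp, ?_⟩
      · simp [List.pairwise_replicate]
      · intro b hb b' hb'
        rw [List.eq_of_mem_replicate hb, List.mem_singleton.mp hb']
        exact le_of_not_ge h

lemma getD_replicate (c : ℝ) : ∀ m k : ℕ, k < m → (List.replicate m c).getD k 0 = c
  | m+1, 0, _ => rfl
  | m+1, k+1, h => by
      rw [List.replicate_succ, List.getD_cons_succ]
      exact getD_replicate c m k (by omega)

lemma orderStat_zero (a c : ℝ) (m : ℕ) (hm : 0 < m) :
    orderStat (a ::ₘ Multiset.replicate m c) 0 = min a c := by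
  rw [orderStat, sort_cons_replicate]
  split_ifs with h
  · simp [min_eq_left h]
  · rw [List.getD_append _ _ _ _ (by simpa using hm), getD_replicate c m 0 hm,
      min_eq_right (le_of_not_ge h)]

lemma orderStat_mid (a c : ℝ) (m k : ℕ) (h1 : 1 ≤ k) (h2 : k < m) :
    orderStat (a ::ₘ Multiset.replicate m c) k = c := by
  rw [orderStat, sort_cons_replicate]
  split_ifs with h
  · obtain ⟨k', rfl⟩ := Nat.exists_eq_add_of_le h1
    rw [add_comm, List.getD_cons_succ, getD_replicate c m k' (by omega)]
  · rw [List.getD_append _ _ _ _ (by simpa using h2), getD_replicate c m k h2]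

lemma orderStat_last (a c : ℝ) (m : ℕ) (hm : 0 < m) :
    orderStat (a ::ₘ Multiset.replicate m c) m = max a c := by
  rw [orderStat, sort_cons_replicate]
  split_ifs with h
  · obtain ⟨m', rfl⟩ := Nat.exists_eq_add_of_le hm
    rw [add_comm, List.getD_cons_succ, getD_replicate c (m'+1) m' (by omega),
      max_eq_right h]
  · rw [List.getD_append_right _ _ _ _ (by simp)]
    simp [max_eq_left (le_of_not_ge h)]

lemma univ_map_const (n : ℕ) (c : ℝ) :
    (Finset.univ.val.map (fun _ : Fin (n+1) => c)) = Multiset.replicate (n+1) c := by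
  rw [Multiset.map_const']
  simp

/-- When all the functions `ψ_j` coincide with a single `ψ : ℝ → ℝ`
(the collision of all singular fibers), the order statistics degenerate: for every `(x,y)`
with all `x j` and `y` nonzero and `∏_j x_j = 1 + y`,
`F_0 = min(Σ_j j·val(x_j), ψ(val y))`, `F_k = ψ(val y)` for `1 ≤ k ≤ n`, and
`F_{n+1} = max(Σ_j (j−n−1)·val(x_j) + (n+1)·min(0, val y), ψ(val y))`. -/
theorem Fmap_degenerate (n : ℕ) (ψ : ℝ → ℝ)
    (x : Fin (n+2) → Nov) (y : Nov)
    (hx : ∀ j, x j ≠ 0) (hy : y ≠ 0) (hprod : (∏ j, x j) = 1 + y) :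
    Fmap n (fun _ => ψ) x y ⟨0, by omega⟩
      = min (∑ j : Fin (n+2), ((j:ℕ):ℝ) * val (x j)) (ψ (val y)) ∧
    (∀ k : Fin (n+1), 1 ≤ (k:ℕ) →
      Fmap n (fun _ => ψ) x y ⟨(k:ℕ), by omega⟩ = ψ (val y)) ∧
    Fmap n (fun _ => ψ) x y ⟨n+1, by omega⟩
      = max ((∑ j : Fin (n+2), (((j:ℕ):ℝ) - ((n:ℝ) + 1)) * val (x j))
          + ((n:ℝ) + 1) * min 0 (val y)) (ψ (val y)) := by
  refine ⟨?_, ?_, ?_⟩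
  · rw [Fmap]
    simp only [Fin.val_mk]
    rw [if_neg (by omega), univ_map_const, orderStat_zero _ _ _ (by omega)]
    norm_num
  · intro k hk
    rw [Fmap]
    simp only [Fin.val_mk]
    rw [if_neg (by omega), univ_map_const, orderStat_mid _ _ _ _ hk (by omega)]
  · rw [Fmap]
    simp only [Fin.val_mk]
    rw [if_neg (by omega), univ_map_const, orderStat_last _ _ _ (by omega)]
    push_cast
    ring_nf
    simp only [Finset.sum_sub_distrib, Finset.sum_add_distrib, Finset.sum_neg_distrib]
    ring
end
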